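/- arXiv:1601.06411 — 10 statements merged into one kernel-verified Lean document; each statement's English description precedes it below -/
import Mathlib

section
/- Let H be a separable Hilbert space (over ℝ or ℂ) and let Φ = {φ_n}_{n∈I} be a frame for H. If Φ does phase retrieval, then Φ has the complement property. -/
/-- Let `H` be a separable Hilbert space (over `ℝ` or `ℂ`) and let
`Φ = {φ n}_{n ∈ I}` be a frame for `H`. If `Φ` does phase retrieval, then `Φ` has the
complement property. -/
theorem phase_retrieval_implies_complement_property
    {𝕜 H I : Type*} [RCLike 𝕜] [NormedAddCommGroup H] [InnerProductSpace 𝕜 H]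
    [CompleteSpace H] [TopologicalSpace.SeparableSpace H] [Countable I]
    (φ : I → H) (A B : ℝ) (hA : 0 < A) (hAB : A ≤ B)
    (hframe : ∀ f : H, ∃ s : ℝ,
      HasSum (fun n => ‖(inner 𝕜 f (φ n) : 𝕜)‖ ^ 2) s ∧ A * ‖f‖ ^ 2 ≤ s ∧ s ≤ B * ‖f‖ ^ 2)
    (hPR : ∀ f g : H, (∀ n, ‖(inner 𝕜 f (φ n) : 𝕜)‖ = ‖(inner 𝕜 g (φ n) : 𝕜)‖) →
      ∃ α : 𝕜, ‖α‖ = 1 ∧ f = α • g) :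
    ∀ S : Set I,
      (Submodule.span 𝕜 (φ '' S)).topologicalClosure = ⊤ ∨
      (Submodule.span 𝕜 (φ '' Sᶜ)).topologicalClosure = ⊤ := by
  -- helper: if x is orthogonal to all φ n then x = 0
  have hzero : ∀ x : H, (∀ n, (inner 𝕜 x (φ n) : 𝕜) = 0) → x = 0 := by
    intro x hx
    obtain ⟨s, hs, hls, _⟩ := hframe x
    have hs0 : s = 0 := hs.unique (by simp only [hx]; simpa using hasSum_zero)
    have hx2 : ‖x‖ ^ 2 ≤ 0 := by nlinarith [norm_nonneg x]
    have : ‖x‖ = 0 := by nlinarith [norm_nonneg x]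
    simpa using this
  intro S
  by_contra hcon
  push_neg at hcon
  obtain ⟨hS, hSc⟩ := hcon
  -- get nonzero u ⊥ span (φ '' S), v ⊥ span (φ '' Sᶜ)
  have hSb : (Submodule.span 𝕜 (φ '' S))ᗮ ≠ ⊥ := by
    intro h
    exact hS (Submodule.topologicalClosure_eq_top_iff.mpr h)
  have hScb : (Submodule.span 𝕜 (φ '' Sᶜ))ᗮ ≠ ⊥ := by
    intro h
    exact hSc (Submodule.topologicalClosure_eq_top_iff.mpr h)
  obtain ⟨u, hu, hu0⟩ := Submodule.exists_mem_ne_zero_of_ne_bot hSb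
  obtain ⟨v, hv, hv0⟩ := Submodule.exists_mem_ne_zero_of_ne_bot hScb
  have huS : ∀ n ∈ S, (inner 𝕜 u (φ n) : 𝕜) = 0 := fun n hn => by
    rw [inner_eq_zero_symm]
    exact hu _ (Submodule.subset_span ⟨n, hn, rfl⟩)
  have hvSc : ∀ n ∉ S, (inner 𝕜 v (φ n) : 𝕜) = 0 := fun n hn => by
    rw [inner_eq_zero_symm]
    exact hv _ (Submodule.subset_span ⟨n, hn, rfl⟩)
  have hnorm : ∀ n, ‖(inner 𝕜 (u + v) (φ n) : 𝕜)‖ = ‖(inner 𝕜 (u - v) (φ n) : 𝕜)‖ := by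
    intro n
    by_cases hn : n ∈ S
    · rw [inner_add_left, inner_sub_left, huS n hn]
      simp
    · rw [inner_add_left, inner_sub_left, hvSc n hn]
      simp
  obtain ⟨α, hα1, hαeq⟩ := hPR (u + v) (u - v) hnorm
  -- (1 - α) • u = -((1 + α) • v)
  have key : (1 - α) • u = -((1 + α) • v) := by
    linear_combination (norm := module) hαeq
  by_cases hα : α = 1
  · subst hα
    simp only [sub_self, zero_smul] at key
    have h2 : ((1 : 𝕜) + 1) • v = 0 := by
      rw [← neg_eq_zero, ← key]
    have : ((1 : 𝕜) + 1) ≠ 0 := by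
      norm_num
    exact hv0 (by simpa [this] using smul_eq_zero.mp h2)
  · have h1α : (1 : 𝕜) - α ≠ 0 := sub_ne_zero.mpr (Ne.symm hα)
    have huv : u = ((1 - α)⁻¹ * -(1 + α)) • v := by
      rw [mul_smul, neg_smul, ← key, inv_smul_smul₀ h1α]
    have : u = 0 := by
      apply hzero
      intro n
      by_cases hn : n ∈ S
      · exact huS n hn
      · rw [huv, inner_smul_left, hvSc n hn, mul_zero]
    exact hu0 this
end

section
/- Let H be a separable Hilbert space over the real numbers and let Φ = {φ_n}_{n∈I} be a frame for H. If Φ has the complement property, then Φ does phase retrieval (i.e., |⟨f,φ_n⟩| = |⟨g,φ_n⟩| for all n ∈ I implies f = g or f = −g). -/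
/-- Let `H` be a separable real Hilbert space and let `Φ = {φ n}_{n ∈ I}`
be a frame for `H`. If `Φ` has the complement property, then `Φ` does phase retrieval:
`|⟨f, φ n⟩| = |⟨g, φ n⟩|` for all `n ∈ I` implies `f = g` or `f = -g`. -/
theorem complement_property_implies_phase_retrieval_real
    {H I : Type*} [NormedAddCommGroup H] [InnerProductSpace ℝ H]
    [CompleteSpace H] [TopologicalSpace.SeparableSpace H] [Countable I]
    (φ : I → H) (A B : ℝ) (hA : 0 < A) (hAB : A ≤ B)
    (hframe : ∀ f : H, ∃ s : ℝ,
      HasSum (fun n => ‖(inner ℝ f (φ n) : ℝ)‖ ^ 2) s ∧ A * ‖f‖ ^ 2 ≤ s ∧ s ≤ B * ‖f‖ ^ 2)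
    (hCP : ∀ S : Set I,
      (Submodule.span ℝ (φ '' S)).topologicalClosure = ⊤ ∨
      (Submodule.span ℝ (φ '' Sᶜ)).topologicalClosure = ⊤) :
    ∀ f g : H, (∀ n, ‖(inner ℝ f (φ n) : ℝ)‖ = ‖(inner ℝ g (φ n) : ℝ)‖) →
      f = g ∨ f = -g := by
  intro f g hfg
  set S : Set I := {n | (inner ℝ (f - g) (φ n) : ℝ) = 0} with hS
  have key : ∀ x : H, ∀ T : Set I, (∀ n ∈ T, (inner ℝ x (φ n) : ℝ) = 0) →
      (Submodule.span ℝ (φ '' T)).topologicalClosure = ⊤ → x = 0 := by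
    intro x T hT hcl
    have hx : x ∈ (Submodule.span ℝ (φ '' T))ᗮ := by
      rw [Submodule.mem_orthogonal]
      intro u hu
      induction hu using Submodule.span_induction with
      | mem v hv =>
          obtain ⟨n, hn, rfl⟩ := hv
          rw [real_inner_comm]; exact hT n hn
      | zero => simp
      | add a b _ _ ha hb => rw [inner_add_left, ha, hb]; ring
      | smul c a _ ha => rw [inner_smul_left, ha]; simp
    rw [Submodule.topologicalClosure_eq_top_iff] at hcl
    simpa [hcl] using hx
  rcases hCP S with h | h
  · left
    have : f - g = 0 := key (f - g) S (fun n hn => hn) h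
    linear_combination (norm := abel) this
  · right
    have hT : ∀ n ∈ Sᶜ, (inner ℝ (f + g) (φ n) : ℝ) = 0 := by
      intro n hn
      have habs := hfg n
      simp only [Real.norm_eq_abs, abs_eq_abs] at habs
      have hne : (inner ℝ (f - g) (φ n) : ℝ) ≠ 0 := hn
      rw [inner_sub_left] at hne
      rw [inner_add_left]
      rcases habs with h1 | h1
      · exact absurd (by rw [h1]; ring) hne
      · rw [h1]; ring
    have : f + g = 0 := key (f + g) Sᶜ hT h
    linear_combination (norm := abel) this
end

section
/- Let Φ = {φ_n}_{n=1}^N be a finite family of vectors in ℂ^M that does phase retrieval for ℂ^M. Then there exists a constant C < ∞ such that for all f, g ∈ ℂ^M: inf_{|α|=1} ‖f − αg‖ ≤ C · (Σ_{n=1}^N (|⟨f,φ_n⟩| − |⟨g,φ_n⟩|)²)^{1/2}. -/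
open Complex Finset

noncomputable def qmap {M : ℕ} (f g : EuclideanSpace ℂ (Fin M)) :
    EuclideanSpace ℂ (Fin M × Fin M) :=
  WithLp.toLp 2 (fun p : Fin M × Fin M => f p.1 * (starRingEnd ℂ) (f p.2) - g p.1 * (starRingEnd ℂ) (g p.2))

lemma norm_sq_eucl {ι : Type*} [Fintype ι] (x : EuclideanSpace ℂ ι) :
    ‖x‖ ^ 2 = ∑ i, Complex.normSq (x i) := by
  rw [EuclideanSpace.norm_eq, Real.sq_sqrt (by positivity)]
  simp [Complex.sq_norm]

lemma normSq_eq_re_mul_conj (z : ℂ) : Complex.normSq z = (z * (starRingEnd ℂ) z).re := by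
  rw [Complex.mul_conj]; simp

lemma aux_double_sum {ι : Type*} [Fintype ι] (a b : ι → ℝ) (u v : ι → ℂ) :
    ∑ i, ∑ j, (a i * a j + b i * b j - 2 * (u i * v j).re) =
      (∑ i, a i) ^ 2 + (∑ i, b i) ^ 2 - 2 * ((∑ i, u i) * (∑ j, v j)).re := by
  rw [sq, sq, Fintype.sum_mul_sum, Fintype.sum_mul_sum, Fintype.sum_mul_sum, Complex.re_sum]
  rw [Finset.mul_sum, ← Finset.sum_add_distrib, ← Finset.sum_sub_distrib]
  refine Finset.sum_congr rfl fun i _ => ?_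
  rw [Complex.re_sum, Finset.mul_sum, ← Finset.sum_add_distrib, ← Finset.sum_sub_distrib]

lemma norm_qmap_sq {M : ℕ} (f g : EuclideanSpace ℂ (Fin M)) :
    ‖qmap f g‖ ^ 2 = ‖f‖ ^ 2 * ‖f‖ ^ 2 + ‖g‖ ^ 2 * ‖g‖ ^ 2
      - 2 * ‖(inner ℂ f g : ℂ)‖ ^ 2 := by
  have key : ∀ p : Fin M × Fin M, Complex.normSq (qmap f g p) =
      Complex.normSq (f p.1) * Complex.normSq (f p.2)
        + Complex.normSq (g p.1) * Complex.normSq (g p.2)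
        - 2 * ((f p.1 * (starRingEnd ℂ) (g p.1)) * ((starRingEnd ℂ) (f p.2) * g p.2)).re := by
    intro p
    have hq : qmap f g p * (starRingEnd ℂ) (qmap f g p) =
        (f p.1 * (starRingEnd ℂ) (f p.1)) * (f p.2 * (starRingEnd ℂ) (f p.2))
          + (g p.1 * (starRingEnd ℂ) (g p.1)) * (g p.2 * (starRingEnd ℂ) (g p.2))
          - ((f p.1 * (starRingEnd ℂ) (g p.1)) * ((starRingEnd ℂ) (f p.2) * g p.2)
            + (starRingEnd ℂ) ((f p.1 * (starRingEnd ℂ) (g p.1)) * ((starRingEnd ℂ) (f p.2) * g p.2))) := by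
      simp only [qmap, PiLp.toLp_apply, map_sub, map_mul, Complex.conj_conj]; ring
    rw [normSq_eq_re_mul_conj, hq, Complex.mul_conj, Complex.mul_conj, Complex.mul_conj,
      Complex.mul_conj, Complex.add_conj]
    push_cast
    simp
  have h3 : ∑ j, ((starRingEnd ℂ) (f j) * g j) = (inner ℂ f g : ℂ) := by
    simp only [PiLp.inner_apply, RCLike.inner_apply, mul_comm]
  have h2 : ∑ i, (f i * (starRingEnd ℂ) (g i)) = (starRingEnd ℂ) (inner ℂ f g : ℂ) := by
    rw [← h3, map_sum]
    exact Finset.sum_congr rfl fun i _ => by simp only [map_mul, Complex.conj_conj]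
  calc ‖qmap f g‖ ^ 2 = ∑ p : Fin M × Fin M, Complex.normSq (qmap f g p) := norm_sq_eucl _
    _ = ∑ i, ∑ j, (Complex.normSq (f i) * Complex.normSq (f j)
        + Complex.normSq (g i) * Complex.normSq (g j)
        - 2 * ((f i * (starRingEnd ℂ) (g i)) * ((starRingEnd ℂ) (f j) * g j)).re) := by
      rw [Fintype.sum_prod_type]
      exact Finset.sum_congr rfl fun i _ => Finset.sum_congr rfl fun j _ => key (i, j)
    _ = (∑ i, Complex.normSq (f i)) ^ 2 + (∑ i, Complex.normSq (g i)) ^ 2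
        - 2 * ((∑ i, (f i * (starRingEnd ℂ) (g i))) * (∑ j, ((starRingEnd ℂ) (f j) * g j))).re := by
      rw [aux_double_sum]
    _ = ‖f‖ ^ 2 * ‖f‖ ^ 2 + ‖g‖ ^ 2 * ‖g‖ ^ 2 - 2 * ‖(inner ℂ f g : ℂ)‖ ^ 2 := by
      rw [h2, h3, ← norm_sq_eucl, ← norm_sq_eucl, ← sq, ← sq]
      congr 1
      have : ((starRingEnd ℂ) (inner ℂ f g : ℂ) * (inner ℂ f g : ℂ)).re = Complex.normSq (inner ℂ f g : ℂ) := by rw [mul_comm, Complex.mul_conj]; simp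
      rw [this, ← Complex.sq_norm]

noncomputable def ell {M : ℕ} (x : EuclideanSpace ℂ (Fin M))
    (Q : EuclideanSpace ℂ (Fin M × Fin M)) : ℝ :=
  (∑ p : Fin M × Fin M, Q p * (x p.2 * (starRingEnd ℂ) (x p.1))).re

lemma norm_sq_complex (z : ℂ) : ‖z‖ ^ 2 = Complex.normSq z := by
  rw [Complex.sq_norm]

lemma ell_qmap {M : ℕ} (f g x : EuclideanSpace ℂ (Fin M)) :
    ell x (qmap f g) = ‖(inner ℂ f x : ℂ)‖ ^ 2 - ‖(inner ℂ g x : ℂ)‖ ^ 2 := by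
  have h1 : ∀ h : EuclideanSpace ℂ (Fin M),
      ∑ p : Fin M × Fin M, (h p.1 * (starRingEnd ℂ) (h p.2)) * (x p.2 * (starRingEnd ℂ) (x p.1))
        = (inner ℂ h x : ℂ) * (starRingEnd ℂ) (inner ℂ h x : ℂ) := by
    intro h
    have hx : (inner ℂ h x : ℂ) = ∑ i, (starRingEnd ℂ) (h i) * x i := by
      simp only [PiLp.inner_apply, RCLike.inner_apply, mul_comm]
    rw [hx, map_sum, Fintype.sum_mul_sum, Fintype.sum_prod_type, Finset.sum_comm]
    refine Finset.sum_congr rfl fun i _ => Finset.sum_congr rfl fun j _ => ?_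
    simp only [map_mul, Complex.conj_conj]
    ring
  have h0 : ∑ p : Fin M × Fin M, qmap f g p * (x p.2 * (starRingEnd ℂ) (x p.1))
      = (inner ℂ f x : ℂ) * (starRingEnd ℂ) (inner ℂ f x : ℂ)
        - (inner ℂ g x : ℂ) * (starRingEnd ℂ) (inner ℂ g x : ℂ) := by
    rw [← h1 f, ← h1 g, ← Finset.sum_sub_distrib]
    exact Finset.sum_congr rfl fun p _ => by simp only [qmap, PiLp.toLp_apply]; ring
  rw [ell, h0, Complex.sub_re, Complex.mul_conj, Complex.mul_conj]
  simp [norm_sq_complex, Complex.sq_norm]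

lemma ell_smul {M : ℕ} (x : EuclideanSpace ℂ (Fin M)) (r : ℝ)
    (Q : EuclideanSpace ℂ (Fin M × Fin M)) :
    ell x ((r : ℂ) • Q) = r * ell x Q := by
  simp only [ell, PiLp.smul_apply, smul_eq_mul]
  simp only [mul_assoc]
  rw [← Finset.mul_sum, Complex.re_ofReal_mul]

lemma ell_continuous {M : ℕ} (x : EuclideanSpace ℂ (Fin M)) : Continuous (ell x) := by
  refine Complex.continuous_re.comp (continuous_finset_sum _ fun p _ => ?_)
  exact ((EuclideanSpace.proj p).continuous).mul continuous_const

lemma qmap_continuous {M : ℕ} :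
    Continuous (fun fg : EuclideanSpace ℂ (Fin M) × EuclideanSpace ℂ (Fin M) =>
      qmap fg.1 fg.2) := by
  have : Continuous (fun fg : EuclideanSpace ℂ (Fin M) × EuclideanSpace ℂ (Fin M) =>
      (fun p : Fin M × Fin M => fg.1 p.1 * (starRingEnd ℂ) (fg.1 p.2)
        - fg.2 p.1 * (starRingEnd ℂ) (fg.2 p.2))) := by
    refine continuous_pi fun p => Continuous.sub (Continuous.mul ?_ ?_) (Continuous.mul ?_ ?_)
    · exact ((EuclideanSpace.proj p.1).continuous).comp continuous_fst
    · exact Complex.continuous_conj.comp (((EuclideanSpace.proj p.2).continuous).comp continuous_fst)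
    · exact ((EuclideanSpace.proj p.1).continuous).comp continuous_snd
    · exact Complex.continuous_conj.comp (((EuclideanSpace.proj p.2).continuous).comp continuous_snd)
  exact (PiLp.continuous_toLp 2 (fun _ : Fin M × Fin M => ℂ)).comp this

lemma qmap_smul {M : ℕ} (f g : EuclideanSpace ℂ (Fin M)) (c : ℂ) :
    qmap (c • f) (c • g) = (c * (starRingEnd ℂ) c) • qmap f g := by
  ext p
  simp only [qmap, PiLp.toLp_apply, PiLp.smul_apply, smul_eq_mul, map_mul]
  ring

lemma qmap_smul_self {M : ℕ} (g : EuclideanSpace ℂ (Fin M)) (α : ℂ) (hα : ‖α‖ = 1) :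
    qmap (α • g) g = 0 := by
  have h1 : α * (starRingEnd ℂ) α = 1 := by
    rw [Complex.mul_conj]
    norm_cast
    rw [Complex.normSq_eq_norm_sq, hα]; norm_num
  ext p
  simp only [qmap, PiLp.toLp_apply, PiLp.smul_apply, smul_eq_mul, map_mul]
  have : α * g p.1 * ((starRingEnd ℂ) α * (starRingEnd ℂ) (g p.2)) =
      (α * (starRingEnd ℂ) α) * (g p.1 * (starRingEnd ℂ) (g p.2)) := by ring
  rw [this, h1, one_mul]
  simp [PiLp.zero_apply]

lemma qmap_parallel {M : ℕ} (f : EuclideanSpace ℂ (Fin M)) (cc : ℂ) (hcc : ‖cc‖ = 1) :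
    qmap f (cc • f) = 0 := by
  have h1 : (starRingEnd ℂ) cc * cc = 1 := by
    rw [mul_comm, Complex.mul_conj]
    norm_cast
    rw [Complex.normSq_eq_norm_sq, hcc]; norm_num
  ext p
  simp only [qmap, PiLp.toLp_apply, PiLp.smul_apply, smul_eq_mul, map_mul]
  have : cc * f p.1 * ((starRingEnd ℂ) cc * (starRingEnd ℂ) (f p.2)) =
      ((starRingEnd ℂ) cc * cc) * (f p.1 * (starRingEnd ℂ) (f p.2)) := by ring
  rw [this, h1, one_mul, sub_self]
  rfl

lemma qmap_hyperbolic {M : ℕ} (f g : EuclideanSpace ℂ (Fin M)) (u : ℝ) (ν : ℂ)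
    (hνν : ν * (starRingEnd ℂ) ν = 1) :
    qmap (f - ((u : ℂ) * (starRingEnd ℂ) ν) • g) (g - ((u : ℂ) * ν) • f)
      = (((1 - u ^ 2 : ℝ) : ℂ)) • qmap f g := by
  ext p
  simp only [qmap, PiLp.toLp_apply, PiLp.sub_apply, PiLp.smul_apply, smul_eq_mul, map_sub, map_mul,
    Complex.conj_conj, Complex.conj_ofReal]
  push_cast
  linear_combination (-(((u : ℂ)) ^ 2) *
    (f p.1 * (starRingEnd ℂ) (f p.2) - g p.1 * (starRingEnd ℂ) (g p.2))) * hνν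

lemma exists_orth {M : ℕ} (f g : EuclideanSpace ℂ (Fin M)) :
    ∃ (f' g' : EuclideanSpace ℂ (Fin M)) (lam : ℝ), 0 < lam ∧ (inner ℂ f' g' : ℂ) = 0 ∧
      qmap f' g' = ((lam : ℝ) : ℂ) • qmap f g := by
  set z : ℂ := inner ℂ f g with hz
  by_cases hz0 : z = 0
  · refine ⟨f, g, 1, one_pos, hz0, ?_⟩
    norm_num
  set A := ‖f‖ ^ 2 with hA
  set B := ‖g‖ ^ 2 with hB
  set r := ‖z‖ with hr
  have hr0 : 0 < r := norm_pos_iff.2 hz0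
  have hCS : r ≤ ‖f‖ * ‖g‖ := norm_inner_le_norm f g
  have h2r : 2 * r ≤ A + B := by nlinarith [norm_nonneg f, norm_nonneg g, sq_nonneg (‖f‖ - ‖g‖)]
  by_cases heq : 2 * r = A + B
  · -- equality case : g is a unimodular multiple of f, qmap f g = 0
    have hf0 : f ≠ 0 := by
      intro h
      apply hz0
      rw [hz, h]; exact inner_zero_left g
    have hg0 : g ≠ 0 := by
      intro h
      apply hz0
      rw [hz, h]; exact inner_zero_right f
    have hrfg : r = ‖f‖ * ‖g‖ := by nlinarith [sq_nonneg (‖f‖ - ‖g‖)]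
    obtain ⟨cc, hcc0, hgcf⟩ := (norm_inner_eq_norm_iff hf0 hg0).1 hrfg
    have hng : ‖g‖ = ‖cc‖ * ‖f‖ := by rw [hgcf, norm_smul]
    have hf0' : 0 < ‖f‖ := norm_pos_iff.2 hf0
    have hB2 : B = (‖cc‖ * ‖f‖) ^ 2 := by rw [hB, hng]
    have hr2 : r = ‖cc‖ * ‖f‖ ^ 2 := by rw [hrfg, hng]; ring
    have key : (‖cc‖ - 1) ^ 2 * ‖f‖ ^ 2 = 0 := by
      linear_combination -hA - hB2 - heq + 2 * hr2
    have hnc : ‖cc‖ = 1 := by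
      rcases mul_eq_zero.1 key with h | h
      · have := pow_eq_zero_iff (n := 2) (by norm_num) |>.1 h
        linarith [sub_eq_zero.1 this]
      · exact absurd (pow_eq_zero_iff (n := 2) (by norm_num) |>.1 h) (ne_of_gt hf0')
    have hq0 : qmap f g = 0 := by rw [hgcf]; exact qmap_parallel f cc hnc
    refine ⟨0, 0, 1, one_pos, inner_zero_left 0, ?_⟩
    rw [hq0, smul_zero]
    ext p; simp [qmap]
  · have hlt : 2 * r < A + B := lt_of_le_of_ne h2r heq
    set D := Real.sqrt ((A + B) ^ 2 - 4 * r ^ 2) with hD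
    have hD0 : 0 ≤ D := Real.sqrt_nonneg _
    have hD2 : D ^ 2 = (A + B) ^ 2 - 4 * r ^ 2 := Real.sq_sqrt (by nlinarith)
    have hDlt : D < A + B := by nlinarith
    set u := (A + B - D) / (2 * r) with hu
    have hu0 : 0 < u := div_pos (by linarith) (by linarith)
    have hu1 : u < 1 := by
      rw [hu, div_lt_one (by linarith)]
      nlinarith
    have hquad : r * u ^ 2 - (A + B) * u + r = 0 := by
      rw [hu]
      field_simp
      nlinarith [hD2]
    set ν : ℂ := z / (r : ℂ) with hν
    have hrne : ((r : ℝ) : ℂ) ≠ 0 := by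
      simp only [ne_eq, Complex.ofReal_eq_zero]; exact ne_of_gt hr0
    have hν2 : ((r : ℝ) : ℂ) * ν = z := by
      rw [hν]; field_simp
    have hzz : z * (starRingEnd ℂ) z = ((r : ℝ) : ℂ) ^ 2 := by
      rw [Complex.mul_conj, Complex.normSq_eq_norm_sq, ← hr]
      push_cast; ring
    have hνν : ν * (starRingEnd ℂ) ν = 1 := by
      have h := congrArg (starRingEnd ℂ) hν2
      rw [map_mul, Complex.conj_ofReal] at h
      have : ((r:ℝ):ℂ) ^ 2 * (ν * (starRingEnd ℂ) ν) = ((r:ℝ):ℂ) ^ 2 * 1 := by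
        calc ((r:ℝ):ℂ) ^ 2 * (ν * (starRingEnd ℂ) ν)
            = (((r:ℝ):ℂ) * ν) * (((r:ℝ):ℂ) * (starRingEnd ℂ) ν) := by ring
          _ = z * (starRingEnd ℂ) z := by rw [hν2, h]
          _ = ((r:ℝ):ℂ) ^ 2 * 1 := by rw [hzz, mul_one]
      exact mul_left_cancel₀ (pow_ne_zero 2 hrne) this
    set f' := f - ((u : ℂ) * (starRingEnd ℂ) ν) • g with hf'
    set g' := g - ((u : ℂ) * ν) • f with hg'
    have hquadC : ((r:ℝ):ℂ) * ((u:ℝ):ℂ) ^ 2 - (((A:ℝ):ℂ) + ((B:ℝ):ℂ)) * ((u:ℝ):ℂ) + ((r:ℝ):ℂ) = 0 := by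
      have := congrArg (fun t : ℝ => (t : ℂ)) hquad
      push_cast at this ⊢
      linear_combination this
    refine ⟨f', g', 1 - u ^ 2, by nlinarith, ?_, ?_⟩
    · -- inner ℂ f' g' = 0
      have hff : (inner ℂ f f : ℂ) = ((A : ℝ) : ℂ) := by
        rw [inner_self_eq_norm_sq_to_K, hA]; norm_cast
      have hgg : (inner ℂ g g : ℂ) = ((B : ℝ) : ℂ) := by
        rw [inner_self_eq_norm_sq_to_K, hB]; norm_cast
      have hgf : (inner ℂ g f : ℂ) = (starRingEnd ℂ) z := by rw [hz, ← inner_conj_symm]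
      have hexp : (inner ℂ f' g' : ℂ) = z - ((u:ℝ):ℂ) * ν * (((A:ℝ):ℂ) + ((B:ℝ):ℂ))
          + ((u:ℝ):ℂ) ^ 2 * ν ^ 2 * (starRingEnd ℂ) z := by
        rw [hf', hg', inner_sub_left, inner_sub_right, inner_sub_right,
          inner_smul_left, inner_smul_right, inner_smul_left, inner_smul_right,
          ← hz, hff, hgg, hgf]
        simp only [map_mul, Complex.conj_conj, Complex.conj_ofReal]
        ring
      have hE : ((r:ℝ):ℂ) ^ 2 * (inner ℂ f' g' : ℂ) = ((r:ℝ):ℂ) ^ 2 * 0 := by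
        rw [hexp, mul_zero]
        linear_combination (-(((u:ℝ):ℂ)) * (((A:ℝ):ℂ) + ((B:ℝ):ℂ)) * ((r:ℝ):ℂ)
            + ((u:ℝ):ℂ) ^ 2 * (starRingEnd ℂ) z * (((r:ℝ):ℂ) * ν + z)) * hν2
          + (((u:ℝ):ℂ) ^ 2 * z) * hzz + (z * ((r:ℝ):ℂ)) * hquadC
      exact mul_left_cancel₀ (pow_ne_zero 2 hrne) hE
    · rw [hf', hg']
      exact qmap_hyperbolic f g u ν hνν
set_option maxHeartbeats 1000000 in
lemma key_bound {M N : ℕ} (φ : Fin N → EuclideanSpace ℂ (Fin M))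
    (hPR : ∀ f g : EuclideanSpace ℂ (Fin M),
      (∀ n, ‖(inner ℂ f (φ n) : ℂ)‖ = ‖(inner ℂ g (φ n) : ℂ)‖) →
      ∃ α : ℂ, ‖α‖ = 1 ∧ f = α • g) :
    ∃ c : ℝ, 0 < c ∧ ∀ f g : EuclideanSpace ℂ (Fin M),
      c * ‖qmap f g‖ ^ 2 ≤
        ∑ n, (‖(inner ℂ f (φ n) : ℂ)‖ ^ 2 - ‖(inner ℂ g (φ n) : ℂ)‖ ^ 2) ^ 2 := by
  classical
  set S : Set (EuclideanSpace ℂ (Fin M) × EuclideanSpace ℂ (Fin M)) :=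
    {fg | ‖fg.1‖ ≤ 1 ∧ ‖fg.2‖ ≤ 1 ∧ ‖qmap fg.1 fg.2‖ = 1} with hS
  set G : EuclideanSpace ℂ (Fin M) × EuclideanSpace ℂ (Fin M) → ℝ :=
    fun fg => ∑ n, (ell (φ n) (qmap fg.1 fg.2)) ^ 2 with hG
  have hGcont : Continuous G :=
    continuous_finset_sum _ fun n _ => ((ell_continuous (φ n)).comp qmap_continuous).pow 2
  have hclosed : IsClosed S := by
    have h1 : IsClosed {fg : EuclideanSpace ℂ (Fin M) × EuclideanSpace ℂ (Fin M) | ‖fg.1‖ ≤ 1} :=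
      isClosed_le continuous_fst.norm continuous_const
    have h2 : IsClosed {fg : EuclideanSpace ℂ (Fin M) × EuclideanSpace ℂ (Fin M) | ‖fg.2‖ ≤ 1} :=
      isClosed_le continuous_snd.norm continuous_const
    have h3 : IsClosed {fg : EuclideanSpace ℂ (Fin M) × EuclideanSpace ℂ (Fin M) |
        ‖qmap fg.1 fg.2‖ = 1} := isClosed_eq qmap_continuous.norm continuous_const
    exact h1.inter (h2.inter h3)
  have hbounded : Bornology.IsBounded S := by
    apply Bornology.IsBounded.subset (Metric.isBounded_closedBall
      (x := (0 : EuclideanSpace ℂ (Fin M) × EuclideanSpace ℂ (Fin M))) (r := 1))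
    intro fg hfg
    rw [Metric.mem_closedBall, dist_zero_right]
    calc ‖fg‖ = max ‖fg.1‖ ‖fg.2‖ := rfl
      _ ≤ 1 := max_le hfg.1 hfg.2.1
  have hcpt : IsCompact S := Metric.isCompact_of_isClosed_isBounded hclosed hbounded
  have hpos : ∀ fg ∈ S, 0 < G fg := by
    rintro ⟨f, g⟩ ⟨hf1, hg1, hq1⟩
    refine lt_of_le_of_ne (Finset.sum_nonneg fun n _ => sq_nonneg _) fun h0 => ?_
    have hall : ∀ n, ell (φ n) (qmap f g) = 0 := by
      intro n
      have h := (Finset.sum_eq_zero_iff_of_nonneg (fun i _ => sq_nonneg _)).1 h0.symm n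
        (Finset.mem_univ n)
      exact pow_eq_zero_iff (n := 2) (by norm_num) |>.1 h
    have hnorm : ∀ n, ‖(inner ℂ f (φ n) : ℂ)‖ = ‖(inner ℂ g (φ n) : ℂ)‖ := by
      intro n
      have h := hall n
      rw [ell_qmap] at h
      have h2 : ‖(inner ℂ f (φ n) : ℂ)‖ ^ 2 = ‖(inner ℂ g (φ n) : ℂ)‖ ^ 2 := by linarith
      rw [← Real.sqrt_sq (norm_nonneg (inner ℂ f (φ n) : ℂ)), h2,
        Real.sqrt_sq (norm_nonneg (inner ℂ g (φ n) : ℂ))]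
    obtain ⟨α, hα, hfg⟩ := hPR f g hnorm
    have hq0 : qmap f g = 0 := by rw [hfg]; exact qmap_smul_self g α hα
    rw [hq0, norm_zero] at hq1
    exact zero_ne_one hq1
  have hnormalize : ∀ f g : EuclideanSpace ℂ (Fin M), qmap f g ≠ 0 →
      ∃ fg₁ : EuclideanSpace ℂ (Fin M) × EuclideanSpace ℂ (Fin M), fg₁ ∈ S ∧
        qmap fg₁.1 fg₁.2 = ((‖qmap f g‖⁻¹ : ℝ) : ℂ) • qmap f g := by
    intro f g hne
    have hR0 : 0 < ‖qmap f g‖ := norm_pos_iff.2 hne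
    obtain ⟨f', g', lam, hlam, horth, hq'⟩ := exists_orth f g
    have hRl : ‖qmap f' g'‖ = lam * ‖qmap f g‖ := by
      rw [hq', norm_smul, Complex.norm_real, Real.norm_eq_abs, abs_of_pos hlam]
    have hlR : 0 < lam * ‖qmap f g‖ := mul_pos hlam hR0
    set s := (Real.sqrt (lam * ‖qmap f g‖))⁻¹ with hs
    have hs0 : 0 < s := inv_pos.2 (Real.sqrt_pos.2 hlR)
    have hs2 : s ^ 2 = (lam * ‖qmap f g‖)⁻¹ := by
      rw [hs, ← Real.sqrt_inv, Real.sq_sqrt (inv_nonneg.2 hlR.le)]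
    set f₁ := ((s : ℝ) : ℂ) • f' with hf₁
    set g₁ := ((s : ℝ) : ℂ) • g' with hg₁
    have hs2lam : s ^ 2 * lam = ‖qmap f g‖⁻¹ := by
      rw [hs2]
      field_simp
    have hq₁ : qmap f₁ g₁ = ((s ^ 2 * lam : ℝ) : ℂ) • qmap f g := by
      rw [hf₁, hg₁, qmap_smul, hq', smul_smul, Complex.conj_ofReal]
      congr 1
      push_cast; ring
    have hnq₁ : ‖qmap f₁ g₁‖ = 1 := by
      rw [hq₁, hs2lam, norm_smul, Complex.norm_real, Real.norm_eq_abs,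
        abs_of_pos (inv_pos.2 hR0)]
      field_simp
    have hinner₁ : (inner ℂ f₁ g₁ : ℂ) = 0 := by
      rw [hf₁, hg₁, inner_smul_left, inner_smul_right, horth, mul_zero, mul_zero]
    have hnorm4 : ‖f₁‖ ^ 2 * ‖f₁‖ ^ 2 + ‖g₁‖ ^ 2 * ‖g₁‖ ^ 2 = 1 := by
      have h := norm_qmap_sq f₁ g₁
      rw [hinner₁, hnq₁, norm_zero] at h
      norm_num at h
      linarith
    have hf₁le : ‖f₁‖ ≤ 1 := by
      nlinarith [norm_nonneg f₁, norm_nonneg g₁, sq_nonneg (‖f₁‖ - 1), sq_nonneg (‖f₁‖ + 1),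
        sq_nonneg (‖g₁‖ ^ 2), sq_nonneg (‖f₁‖ ^ 2 - 1)]
    have hg₁le : ‖g₁‖ ≤ 1 := by
      nlinarith [norm_nonneg f₁, norm_nonneg g₁, sq_nonneg (‖g₁‖ - 1), sq_nonneg (‖g₁‖ + 1),
        sq_nonneg (‖f₁‖ ^ 2), sq_nonneg (‖g₁‖ ^ 2 - 1)]
    refine ⟨(f₁, g₁), ⟨hf₁le, hg₁le, hnq₁⟩, ?_⟩
    rw [hq₁, hs2lam]
  by_cases hSne : S.Nonempty
  · obtain ⟨fg₀, hfg₀, hmin⟩ := hcpt.exists_isMinOn hSne hGcont.continuousOn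
    refine ⟨G fg₀, hpos fg₀ hfg₀, fun f g => ?_⟩
    by_cases hne : qmap f g = 0
    · rw [hne, norm_zero]
      simpa using Finset.sum_nonneg fun n (_ : n ∈ Finset.univ) =>
        sq_nonneg (‖(inner ℂ f (φ n) : ℂ)‖ ^ 2 - ‖(inner ℂ g (φ n) : ℂ)‖ ^ 2)
    · obtain ⟨fg₁, hfg₁S, hfg₁q⟩ := hnormalize f g hne
      have h1 : G fg₀ ≤ G fg₁ := hmin hfg₁S
      have h2 : G fg₁ = (‖qmap f g‖⁻¹) ^ 2 * ∑ n, (ell (φ n) (qmap f g)) ^ 2 := by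
        rw [hG]
        simp only [hfg₁q, ell_smul, mul_pow]
        rw [← Finset.mul_sum]
      have hR0 : 0 < ‖qmap f g‖ := norm_pos_iff.2 hne
      rw [h2] at h1
      revert h1
      generalize hSig : ∑ n, (ell (φ n) (qmap f g)) ^ 2 = Sig0
      intro h1
      have hrw : ∑ n, (‖(inner ℂ f (φ n) : ℂ)‖ ^ 2 - ‖(inner ℂ g (φ n) : ℂ)‖ ^ 2) ^ 2 = Sig0 := by
        rw [← hSig]
        exact Finset.sum_congr rfl fun n _ => by rw [ell_qmap]
      rw [hrw]
      have h4 := mul_le_mul_of_nonneg_right h1 (sq_nonneg ‖qmap f g‖)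
      have heq : (‖qmap f g‖⁻¹) ^ 2 * Sig0 * ‖qmap f g‖ ^ 2 = Sig0 := by
        field_simp
      linarith
  · refine ⟨1, one_pos, fun f g => ?_⟩
    by_cases hne : qmap f g = 0
    · rw [hne, norm_zero]
      simpa using Finset.sum_nonneg fun n (_ : n ∈ Finset.univ) =>
        sq_nonneg (‖(inner ℂ f (φ n) : ℂ)‖ ^ 2 - ‖(inner ℂ g (φ n) : ℂ)‖ ^ 2)
    · obtain ⟨fg₁, hfg₁S, -⟩ := hnormalize f g hne
      exact absurd ⟨fg₁, hfg₁S⟩ hSne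
lemma real_combine {A B T P S c : ℝ} (hc : 0 < c) (hA : 0 ≤ A) (hB : 0 ≤ B) (hT : 0 ≤ T)
    (hP : 0 ≤ P) (hS : 0 ≤ S) (hT2 : T ^ 2 ≤ A * B)
    (hstep2 : c * (A * A + B * B - 2 * T ^ 2) ≤ 2 * (A + B) * P * S) :
    A + B - 2 * T ≤ (8 * P / c) * S := by
  have h2T : 2 * T ≤ A + B := by nlinarith [sq_nonneg (A - B)]
  by_cases hAB : A + B = 0
  · have hT0 : T = 0 := by nlinarith
    rw [hAB, hT0]
    have : (0:ℝ) ≤ (8 * P / c) * S := mul_nonneg (div_nonneg (by positivity) hc.le) hS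
    linarith
  · have hABpos : 0 < A + B := lt_of_le_of_ne (by linarith) (Ne.symm hAB)
    have hstep3 : (A + B - 2 * T) * (A + B) ≤ 4 * (A * A + B * B - 2 * T ^ 2) := by
      nlinarith [sq_nonneg (A - B), mul_nonneg hT (by linarith : (0:ℝ) ≤ A + B - 2 * T), hT2]
    have hchain : (c * (A + B - 2 * T)) * (A + B) ≤ (8 * P * S) * (A + B) := by
      nlinarith [mul_le_mul_of_nonneg_left hstep3 hc.le]
    have hfinal : c * (A + B - 2 * T) ≤ 8 * P * S := le_of_mul_le_mul_right hchain hABpos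
    rw [div_mul_eq_mul_div, le_div_iff₀ hc]
    nlinarith [hfinal]

set_option maxHeartbeats 1000000 in
/-- Let `Φ = {φ n}_{n=1}^N` be a finite family of vectors in `ℂ^M` doing
phase retrieval for `ℂ^M`. Then there is a constant `C < ∞` such that for all `f, g ∈ ℂ^M`,
`inf_{|α|=1} ‖f - α g‖ ≤ C · (∑ n, (|⟨f, φ n⟩| - |⟨g, φ n⟩|)²)^{1/2}`. -/
theorem finite_dim_phase_retrieval_stable
    {M N : ℕ} (φ : Fin N → EuclideanSpace ℂ (Fin M))
    (hPR : ∀ f g : EuclideanSpace ℂ (Fin M),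
      (∀ n, ‖(inner ℂ f (φ n) : ℂ)‖ = ‖(inner ℂ g (φ n) : ℂ)‖) →
      ∃ α : ℂ, ‖α‖ = 1 ∧ f = α • g) :
    ∃ C : ℝ, ∀ f g : EuclideanSpace ℂ (Fin M),
      (⨅ α : Metric.sphere (0 : ℂ) 1, ‖f - (α : ℂ) • g‖) ≤
        C * Real.sqrt (∑ n, (‖(inner ℂ f (φ n) : ℂ)‖ - ‖(inner ℂ g (φ n) : ℂ)‖) ^ 2) := by
  obtain ⟨c, hc, hkey⟩ := key_bound φ hPR
  have hP2nn : (0:ℝ) ≤ ∑ n, ‖φ n‖ ^ 2 := Finset.sum_nonneg fun n _ => sq_nonneg _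
  refine ⟨Real.sqrt (8 * (∑ n, ‖φ n‖ ^ 2) / c), fun f g => ?_⟩
  have hSnn : (0:ℝ) ≤ ∑ n, (‖(inner ℂ f (φ n) : ℂ)‖ - ‖(inner ℂ g (φ n) : ℂ)‖) ^ 2 :=
    Finset.sum_nonneg fun n _ => sq_nonneg _
  have hbdd : BddBelow (Set.range fun α : Metric.sphere (0:ℂ) 1 => ‖f - (α:ℂ) • g‖) := by
    refine ⟨0, ?_⟩
    rintro x ⟨α, rfl⟩
    exact norm_nonneg _
  -- choose a best phase α₀
  have hα₀ : ∃ α₀ : Metric.sphere (0:ℂ) 1,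
      ‖f - (α₀:ℂ) • g‖ ^ 2 = ‖f‖ ^ 2 + ‖g‖ ^ 2 - 2 * ‖(inner ℂ f g : ℂ)‖ := by
    by_cases hz0 : (inner ℂ f g : ℂ) = 0
    · refine ⟨⟨1, by simp⟩, ?_⟩
      rw [norm_sub_sq (𝕜 := ℂ), inner_smul_right, hz0]
      simp [norm_smul]
    · set T := ‖(inner ℂ f g : ℂ)‖ with hT
      have hT0 : 0 < T := norm_pos_iff.2 hz0
      have hTne : ((T:ℝ):ℂ) ≠ 0 := by
        simp only [ne_eq, Complex.ofReal_eq_zero]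
        exact ne_of_gt hT0
      set α : ℂ := (starRingEnd ℂ) (inner ℂ f g : ℂ) / ((T:ℝ):ℂ) with hα
      have hαnorm : ‖α‖ = 1 := by
        rw [hα, norm_div, RCLike.norm_conj, Complex.norm_real, Real.norm_eq_abs,
          abs_of_pos hT0, ← hT, div_self (ne_of_gt hT0)]
      have hαz : α * (inner ℂ f g : ℂ) = ((T:ℝ):ℂ) := by
        rw [hα, div_mul_eq_mul_div, mul_comm, Complex.mul_conj, Complex.normSq_eq_norm_sq,
          ← hT]
        push_cast
        rw [pow_two, mul_div_assoc, div_self hTne, mul_one]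
      refine ⟨⟨α, by simpa [mem_sphere_iff_norm] using hαnorm⟩, ?_⟩
      rw [norm_sub_sq (𝕜 := ℂ), inner_smul_right, hαz]
      simp [norm_smul, hαnorm]
      ring
  obtain ⟨α₀, hval⟩ := hα₀
  -- basic facts
  have hTle : ‖(inner ℂ f g : ℂ)‖ ≤ ‖f‖ * ‖g‖ := norm_inner_le_norm f g
  have hT0' : (0:ℝ) ≤ ‖(inner ℂ f g : ℂ)‖ := norm_nonneg _
  have h2T : 2 * ‖(inner ℂ f g : ℂ)‖ ≤ ‖f‖ ^ 2 + ‖g‖ ^ 2 := by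
    nlinarith [norm_nonneg f, norm_nonneg g, sq_nonneg (‖f‖ - ‖g‖)]
  -- step 1 : difference of squares bounded by the target sum
  have hstep1 : ∑ n, (‖(inner ℂ f (φ n) : ℂ)‖ ^ 2 - ‖(inner ℂ g (φ n) : ℂ)‖ ^ 2) ^ 2 ≤
      2 * (‖f‖ ^ 2 + ‖g‖ ^ 2) * (∑ n, ‖φ n‖ ^ 2) *
        ∑ n, (‖(inner ℂ f (φ n) : ℂ)‖ - ‖(inner ℂ g (φ n) : ℂ)‖) ^ 2 := by
    rw [Finset.mul_sum]
    apply Finset.sum_le_sum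
    intro n _
    have hfn : ‖(inner ℂ f (φ n) : ℂ)‖ ≤ ‖f‖ * ‖φ n‖ := norm_inner_le_norm f (φ n)
    have hgn : ‖(inner ℂ g (φ n) : ℂ)‖ ≤ ‖g‖ * ‖φ n‖ := norm_inner_le_norm g (φ n)
    have hφn : ‖φ n‖ ^ 2 ≤ ∑ i, ‖φ i‖ ^ 2 :=
      Finset.single_le_sum (fun i _ => sq_nonneg ‖φ i‖) (Finset.mem_univ n)
    have h1 : (‖(inner ℂ f (φ n) : ℂ)‖ + ‖(inner ℂ g (φ n) : ℂ)‖) ^ 2 ≤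
        2 * (‖f‖ ^ 2 + ‖g‖ ^ 2) * (∑ i, ‖φ i‖ ^ 2) := by
      nlinarith [norm_nonneg f, norm_nonneg g, norm_nonneg (φ n),
        norm_nonneg (inner ℂ f (φ n) : ℂ), norm_nonneg (inner ℂ g (φ n) : ℂ),
        sq_nonneg (‖f‖ - ‖g‖), sq_nonneg (‖f‖ * ‖φ n‖ + ‖g‖ * ‖φ n‖), hφn,
        mul_nonneg (norm_nonneg f) (norm_nonneg (φ n)),
        mul_nonneg (norm_nonneg g) (norm_nonneg (φ n))]
    calc (‖(inner ℂ f (φ n) : ℂ)‖ ^ 2 - ‖(inner ℂ g (φ n) : ℂ)‖ ^ 2) ^ 2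
        = (‖(inner ℂ f (φ n) : ℂ)‖ + ‖(inner ℂ g (φ n) : ℂ)‖) ^ 2 *
            (‖(inner ℂ f (φ n) : ℂ)‖ - ‖(inner ℂ g (φ n) : ℂ)‖) ^ 2 := by ring
      _ ≤ 2 * (‖f‖ ^ 2 + ‖g‖ ^ 2) * (∑ i, ‖φ i‖ ^ 2) *
            (‖(inner ℂ f (φ n) : ℂ)‖ - ‖(inner ℂ g (φ n) : ℂ)‖) ^ 2 :=
          mul_le_mul_of_nonneg_right h1 (sq_nonneg _)
  -- step 2 : from key bound
  have hstep2 : c * (‖f‖ ^ 2 * ‖f‖ ^ 2 + ‖g‖ ^ 2 * ‖g‖ ^ 2 - 2 * ‖(inner ℂ f g : ℂ)‖ ^ 2) ≤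
      2 * (‖f‖ ^ 2 + ‖g‖ ^ 2) * (∑ n, ‖φ n‖ ^ 2) *
        ∑ n, (‖(inner ℂ f (φ n) : ℂ)‖ - ‖(inner ℂ g (φ n) : ℂ)‖) ^ 2 := by
    have h := hkey f g
    rw [norm_qmap_sq] at h
    exact le_trans h hstep1
  -- main bound under the square root
  have hT2 : ‖(inner ℂ f g : ℂ)‖ ^ 2 ≤ ‖f‖ ^ 2 * ‖g‖ ^ 2 := by
    nlinarith [hTle, hT0']
  have hmain : ‖f‖ ^ 2 + ‖g‖ ^ 2 - 2 * ‖(inner ℂ f g : ℂ)‖ ≤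
      (8 * (∑ n, ‖φ n‖ ^ 2) / c) *
        ∑ n, (‖(inner ℂ f (φ n) : ℂ)‖ - ‖(inner ℂ g (φ n) : ℂ)‖) ^ 2 :=
    real_combine hc (sq_nonneg ‖f‖) (sq_nonneg ‖g‖) hT0' hP2nn hSnn hT2 hstep2
  calc (⨅ α : Metric.sphere (0:ℂ) 1, ‖f - (α:ℂ) • g‖) ≤ ‖f - (α₀ : ℂ) • g‖ := ciInf_le hbdd α₀
    _ = Real.sqrt (‖f‖ ^ 2 + ‖g‖ ^ 2 - 2 * ‖(inner ℂ f g : ℂ)‖) := by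
        rw [← hval, Real.sqrt_sq (norm_nonneg _)]
    _ ≤ Real.sqrt ((8 * (∑ n, ‖φ n‖ ^ 2) / c) *
          ∑ n, (‖(inner ℂ f (φ n) : ℂ)‖ - ‖(inner ℂ g (φ n) : ℂ)‖) ^ 2) := Real.sqrt_le_sqrt hmain
    _ = Real.sqrt (8 * (∑ n, ‖φ n‖ ^ 2) / c) *
          Real.sqrt (∑ n, (‖(inner ℂ f (φ n) : ℂ)‖ - ‖(inner ℂ g (φ n) : ℂ)‖) ^ 2) :=
        Real.sqrt_mul (div_nonneg (mul_nonneg (by norm_num) hP2nn) hc.le) _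
end

section
/- Let H be an infinite-dimensional separable Hilbert space and suppose Φ = {φ_n}_{n∈ℕ} is a frame for H that does phase retrieval. Then for every ε > 0 there exists a sequence Ψ = {ψ_n}_{n∈ℕ} in H which does not do phase retrieval (indeed fails the complement property) and satisfies Σ_{n∈ℕ} ‖φ_n − ψ_n‖² < ε. -/
/-- In an infinite-dimensional separable Hilbert space, any frame doing
phase retrieval can be perturbed by an arbitrarily small amount (in the `ℓ²` sense) into a
family which fails the complement property, hence does not do phase retrieval. -/
theorem phase_retrieval_frames_not_open_infinite_dim
    {𝕜 H : Type*} [RCLike 𝕜] [NormedAddCommGroup H] [InnerProductSpace 𝕜 H]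
    [CompleteSpace H] [TopologicalSpace.SeparableSpace H]
    (hinf : ¬ FiniteDimensional 𝕜 H)
    (φ : ℕ → H) (A B : ℝ) (hA : 0 < A) (hAB : A ≤ B)
    (hframe : ∀ f : H, ∃ s : ℝ,
      HasSum (fun n => ‖(inner 𝕜 f (φ n) : 𝕜)‖ ^ 2) s ∧ A * ‖f‖ ^ 2 ≤ s ∧ s ≤ B * ‖f‖ ^ 2)
    (hPR : ∀ f g : H, (∀ n, ‖(inner 𝕜 f (φ n) : 𝕜)‖ = ‖(inner 𝕜 g (φ n) : 𝕜)‖) →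
      ∃ α : 𝕜, ‖α‖ = 1 ∧ f = α • g) :
    ∀ ε > (0 : ℝ), ∃ ψ : ℕ → H,
      (∃ S : Set ℕ,
        (Submodule.span 𝕜 (ψ '' S)).topologicalClosure ≠ ⊤ ∧
        (Submodule.span 𝕜 (ψ '' Sᶜ)).topologicalClosure ≠ ⊤) ∧
      ¬ (∀ f g : H, (∀ n, ‖(inner 𝕜 f (ψ n) : 𝕜)‖ = ‖(inner 𝕜 g (ψ n) : 𝕜)‖) →
          ∃ α : 𝕜, ‖α‖ = 1 ∧ f = α • g) ∧
      ∃ s : ℝ, HasSum (fun n => ‖φ n - ψ n‖ ^ 2) s ∧ s < ε := by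
  intro ε hε
  -- a unit vector
  have hnt : Nontrivial H := by
    by_contra h
    rw [not_nontrivial_iff_subsingleton] at h
    exact hinf inferInstance
  obtain ⟨x, hx⟩ := exists_ne (0 : H)
  obtain ⟨e, he1⟩ : ∃ e : H, ‖e‖ = 1 := by
    refine ⟨((‖x‖ : 𝕜))⁻¹ • x, ?_⟩
    have hxn : ‖x‖ ≠ 0 := norm_ne_zero_iff.2 hx
    rw [norm_smul, norm_inv, RCLike.norm_ofReal, abs_of_nonneg (norm_nonneg x),
      inv_mul_cancel₀ hxn]
  have hee : (inner 𝕜 e e : 𝕜) = 1 := by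
    rw [inner_self_eq_norm_sq_to_K, he1]; norm_num
  -- summability from the frame condition
  set t : ℕ → ℝ := fun n => ‖(inner 𝕜 e (φ n) : 𝕜)‖ ^ 2 with ht_def
  obtain ⟨s₀, hs₀, -, -⟩ := hframe e
  have hsumm : Summable t := hs₀.summable
  -- choose N with small tail
  have htail : Filter.Tendsto (fun i => ∑' k, t (k + i)) Filter.atTop (nhds 0) :=
    tendsto_sum_nat_add t
  obtain ⟨N, hN⟩ := (htail.eventually_lt_const hε).exists
  -- the perturbed family
  set ψ : ℕ → H := fun n => if n < N then φ n else φ n - (inner 𝕜 e (φ n) : 𝕜) • e with hψ_def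
  have hψlt : ∀ n, n < N → ψ n = φ n := fun n hn => if_pos hn
  have hψge : ∀ n, ¬ n < N → ψ n = φ n - (inner 𝕜 e (φ n) : 𝕜) • e := fun n hn => if_neg hn
  have hinner0 : ∀ n, ¬ n < N → (inner 𝕜 e (ψ n) : 𝕜) = 0 := by
    intro n hn
    rw [hψge n hn, inner_sub_right, inner_smul_right, hee, mul_one, sub_self]
  -- the finite-dimensional subspace
  set M : Submodule 𝕜 H := Submodule.span 𝕜 (insert e (φ '' Set.Iio N)) with hM_def
  have hMfin : FiniteDimensional 𝕜 M :=
    FiniteDimensional.span_of_finite 𝕜 (((Set.finite_Iio N).image φ).insert e)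
  have hMtop : M ≠ ⊤ := by
    intro h
    apply hinf
    have : FiniteDimensional 𝕜 (⊤ : Submodule 𝕜 H) := h ▸ hMfin
    exact (Submodule.topEquiv (R := 𝕜) (M := H)).finiteDimensional
  -- a nonzero vector orthogonal to M
  have hMbot : Mᗮ ≠ ⊥ := by
    intro h
    exact hMtop ((Submodule.orthogonal_eq_bot_iff).1 h)
  obtain ⟨v, hvM, hv0⟩ := Submodule.exists_mem_ne_zero_of_ne_bot hMbot
  have heM : e ∈ M := Submodule.subset_span (Set.mem_insert _ _)
  have hφM : ∀ n, n < N → φ n ∈ M := fun n hn =>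
    Submodule.subset_span (Set.mem_insert_of_mem _ ⟨n, hn, rfl⟩)
  have hvev : (inner 𝕜 e v : 𝕜) = 0 := hvM e heM
  have hve : (inner 𝕜 v e : 𝕜) = 0 := by
    rw [← inner_conj_symm, hvev, map_zero]
  have hvφ : ∀ n, n < N → (inner 𝕜 v (ψ n) : 𝕜) = 0 := by
    intro n hn
    rw [hψlt n hn, ← inner_conj_symm, hvM (φ n) (hφM n hn), map_zero]
  refine ⟨ψ, ⟨{n | N ≤ n}, ?_, ?_⟩, ?_, ?_⟩
  · -- span of tail not dense
    intro h
    have hle : Submodule.span 𝕜 (ψ '' {n | N ≤ n}) ≤ (𝕜 ∙ e)ᗮ := by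
      rw [Submodule.span_le]
      rintro - ⟨n, hn, rfl⟩
      exact Submodule.mem_orthogonal_singleton_iff_inner_right.2
        (hinner0 n (not_lt.2 hn))
    have := Submodule.topologicalClosure_minimal _ hle (Submodule.isClosed_orthogonal _)
    rw [h, top_le_iff] at this
    have : e ∈ (𝕜 ∙ e)ᗮ := this ▸ Submodule.mem_top
    have := Submodule.mem_orthogonal_singleton_iff_inner_right.1 this
    rw [hee] at this
    exact one_ne_zero this
  · -- span of head not dense
    intro h
    have hle : Submodule.span 𝕜 (ψ '' {n | N ≤ n}ᶜ) ≤ M := by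
      rw [Submodule.span_le]
      rintro - ⟨n, hn, rfl⟩
      have hn' : n < N := not_le.1 hn
      rw [hψlt n hn']
      exact hφM n hn'
    have := Submodule.topologicalClosure_minimal _ hle M.closed_of_finiteDimensional
    rw [h, top_le_iff] at this
    exact hMtop this
  · -- phase retrieval fails
    intro h
    obtain ⟨α, hα1, hαeq⟩ := h (e + v) (e - v) (by
      intro n
      by_cases hn : n < N
      · rw [inner_add_left, inner_sub_left, hvφ n hn, add_zero, sub_zero]
      · rw [inner_add_left, inner_sub_left, hinner0 n hn, zero_add, zero_sub, norm_neg])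
    -- take inner product with v
    have hkey : (inner 𝕜 v (e + v) : 𝕜) = inner 𝕜 v (α • (e - v)) := by rw [← hαeq]
    rw [inner_add_right, inner_smul_right, inner_sub_right, hve, zero_add, zero_sub,
      mul_neg] at hkey
    have hvv : (inner 𝕜 v v : 𝕜) ≠ 0 := inner_self_ne_zero.2 hv0
    have hαm1 : α = -1 := by
      have : (1 + α) * (inner 𝕜 v v : 𝕜) = 0 := by ring_nf; linear_combination hkey
      rcases mul_eq_zero.1 this with h' | h'
      · linear_combination h'
      · exact absurd h' hvv
    rw [hαm1, neg_one_smul, neg_sub] at hαeq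
    have : e + e = 0 := by
      have := hαeq
      rw [sub_eq_add_neg] at this
      have h2 : e + v - (v - e) = 0 := by rw [← hαeq]; abel
      rw [show e + v - (v - e) = e + e by abel] at h2
      exact h2
    have he0 : e = 0 := by
      have h2 : (2 : 𝕜) • e = 0 := by rw [two_smul]; exact this
      rcases smul_eq_zero.1 h2 with h' | h'
      · exact absurd h' two_ne_zero
      · exact h'
    rw [he0, norm_zero] at he1
    exact zero_ne_one he1
  · -- the perturbation is small
    refine ⟨∑' k, t (k + N), ?_, hN⟩
    have hc : HasSum (fun n => t (n + N)) (∑' k, t (k + N)) :=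
      ((summable_nat_add_iff N).2 hsumm).hasSum
    have hc2 : HasSum (fun n => ‖φ (n + N) - ψ (n + N)‖ ^ 2) (∑' k, t (k + N)) := by
      refine hc.congr_fun fun n => ?_
      rw [hψge (n + N) (by omega), sub_sub_cancel, norm_smul, he1, mul_one, ht_def]
    have := (hasSum_nat_add_iff (f := fun n => ‖φ n - ψ n‖ ^ 2) N).1 hc2
    rw [Finset.sum_eq_zero (fun i hi => by
      rw [hψlt i (Finset.mem_range.1 hi), sub_self, norm_zero, zero_pow two_ne_zero]),
      add_zero] at this
    exact this
end

section
/- Let H be an infinite-dimensional separable Hilbert space and let Φ = {φ_n}_{n∈ℕ} be a frame for H with frame bounds 0 < A ≤ B < ∞, and suppose ‖φ_n‖ ≥ c > 0 for every n ∈ ℕ. Then for every δ > 0 there exist f, g ∈ H such that inf_{|α|=1} ‖f − αg‖ ≥ 1 but (Σ_{n∈ℕ} (|⟨f,φ_n⟩| − |⟨g,φ_n⟩|)²)^{1/2} < δ. In particular, phase retrieval in an infinite-dimensional Hilbert space is never uniformly stable. -/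
open scoped BigOperators
open Filter

lemma aux_minsq {𝕜 : Type*} [RCLike 𝕜] (a b : 𝕜) :
    (‖a + b‖ - ‖a - b‖) ^ 2 ≤ 4 * min (‖a‖ ^ 2) (‖b‖ ^ 2) := by
  have h1 : ‖a + b‖ - ‖a - b‖ ≤ 2 * ‖b‖ := by
    have := norm_sub_norm_le (a + b) (a - b)
    have h2 : (a + b) - (a - b) = b + b := by ring
    rw [h2] at this
    calc ‖a + b‖ - ‖a - b‖ ≤ ‖b + b‖ := this
      _ ≤ ‖b‖ + ‖b‖ := norm_add_le _ _
      _ = 2 * ‖b‖ := by ring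
  have h1' : ‖a - b‖ - ‖a + b‖ ≤ 2 * ‖b‖ := by
    have := norm_sub_norm_le (a - b) (a + b)
    have h2 : (a - b) - (a + b) = -(b + b) := by ring
    rw [h2, norm_neg] at this
    calc ‖a - b‖ - ‖a + b‖ ≤ ‖b + b‖ := this
      _ ≤ ‖b‖ + ‖b‖ := norm_add_le _ _
      _ = 2 * ‖b‖ := by ring
  have h3 : ‖a + b‖ - ‖a - b‖ ≤ 2 * ‖a‖ := by
    have := norm_sub_norm_le (a + b) (a - b)
    have h2 : (a + b) - (a - b) = b + b := by ring
    have h4 := norm_sub_norm_le (b + a) (b - a)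
    have h5 : (b + a) - (b - a) = a + a := by ring
    rw [h5] at h4
    have e1 : ‖a + b‖ = ‖b + a‖ := by rw [add_comm]
    have e2 : ‖a - b‖ = ‖b - a‖ := by rw [← norm_neg]; congr 1; ring
    calc ‖a + b‖ - ‖a - b‖ = ‖b + a‖ - ‖b - a‖ := by rw [e1, e2]
      _ ≤ ‖a + a‖ := h4
      _ ≤ ‖a‖ + ‖a‖ := norm_add_le _ _
      _ = 2 * ‖a‖ := by ring
  have h3' : ‖a - b‖ - ‖a + b‖ ≤ 2 * ‖a‖ := by
    have h4 := norm_sub_norm_le (b - a) (b + a)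
    have h5 : (b - a) - (b + a) = -(a + a) := by ring
    rw [h5, norm_neg] at h4
    have e1 : ‖a + b‖ = ‖b + a‖ := by rw [add_comm]
    have e2 : ‖a - b‖ = ‖b - a‖ := by rw [← norm_neg]; congr 1; ring
    calc ‖a - b‖ - ‖a + b‖ = ‖b - a‖ - ‖b + a‖ := by rw [e1, e2]
      _ ≤ ‖a + a‖ := h4
      _ ≤ ‖a‖ + ‖a‖ := norm_add_le _ _
      _ = 2 * ‖a‖ := by ring
  rcases le_total (‖a‖) (‖b‖) with h | h
  · rw [min_eq_left (pow_le_pow_left₀ (norm_nonneg a) h 2)]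
    nlinarith [norm_nonneg a]
  · rw [min_eq_right (pow_le_pow_left₀ (norm_nonneg b) h 2)]
    nlinarith [norm_nonneg b]

set_option maxHeartbeats 1000000

/-- **Main theorem.** Let `H` be an infinite-dimensional separable Hilbert
space and `Φ = {φ n}` a frame with bounds `0 < A ≤ B < ∞` and `‖φ n‖ ≥ c > 0` for all `n`.
Then for every `δ > 0` there are `f, g ∈ H` with `inf_{|α|=1} ‖f - α g‖ ≥ 1` but
`‖A_Φ(f) - A_Φ(g)‖ < δ`: phase retrieval is never uniformly stable in infinite dimensions. -/
theorem phase_retrieval_never_uniformly_stable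
    {𝕜 H : Type*} [RCLike 𝕜] [NormedAddCommGroup H] [InnerProductSpace 𝕜 H]
    [CompleteSpace H] [TopologicalSpace.SeparableSpace H]
    (hinf : ¬ FiniteDimensional 𝕜 H)
    (φ : ℕ → H) (A B c : ℝ) (hA : 0 < A) (hAB : A ≤ B) (hc : 0 < c)
    (hnorm : ∀ n, c ≤ ‖φ n‖)
    (hframe : ∀ f : H, ∃ s : ℝ,
      HasSum (fun n => ‖(inner 𝕜 f (φ n) : 𝕜)‖ ^ 2) s ∧ A * ‖f‖ ^ 2 ≤ s ∧ s ≤ B * ‖f‖ ^ 2) :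
    ∀ δ > (0 : ℝ), ∃ f g : H,
      (∀ α : 𝕜, ‖α‖ = 1 → 1 ≤ ‖f - α • g‖) ∧
      Real.sqrt (∑' n, (‖(inner 𝕜 f (φ n) : 𝕜)‖ - ‖(inner 𝕜 g (φ n) : 𝕜)‖) ^ 2) < δ := by
  intro δ hδ
  -- orthonormal sequence
  obtain ⟨w, b, hb⟩ := exists_hilbertBasis 𝕜 H
  have hwinf : w.Infinite := by
    intro hwfin
    apply hinf
    have hspan : (Submodule.span 𝕜 (Set.range fun x : w => (x : H))).topologicalClosure = ⊤ := by
      have := b.dense_span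
      rwa [hb] at this
    have hr : (Set.range fun x : w => (x : H)) = w := Subtype.range_coe
    rw [hr] at hspan
    have hfin : FiniteDimensional 𝕜 (Submodule.span 𝕜 w) :=
      FiniteDimensional.span_of_finite 𝕜 hwfin
    have hclosed : IsClosed ((Submodule.span 𝕜 w : Submodule 𝕜 H) : Set H) :=
      Submodule.closed_of_finiteDimensional _
    rw [hclosed.submodule_topologicalClosure_eq] at hspan
    rw [hspan] at hfin
    exact (Submodule.topEquiv : (⊤ : Submodule 𝕜 H) ≃ₗ[𝕜] H).finiteDimensional
  let emb := hwinf.natEmbedding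
  let e : ℕ → H := fun k => ((emb k : w) : H)
  have horth : Orthonormal 𝕜 e := by
    have hb' : Orthonormal 𝕜 ((↑) : w → H) := hb ▸ b.orthonormal
    exact hb'.comp _ emb.injective
  have hnorm_e : ∀ k, ‖e k‖ = 1 := horth.1
  -- coefficients of e 0
  obtain ⟨s, hs, -, -⟩ := hframe (e 0)
  set a : ℕ → ℝ := fun n => ‖(inner 𝕜 (e 0) (φ n) : 𝕜)‖ ^ 2 with ha
  have hsum_a : Summable a := hs.summable
  set ε2 : ℝ := δ ^ 2 / 16 with hε2
  have hε2pos : 0 < ε2 := by positivity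
  -- choose finite set S capturing most of the mass of a
  obtain ⟨S, hS⟩ := ((tendsto_order.1 (tendsto_tsum_compl_atTop_zero a)).2 _ hε2pos).exists
  -- choose K with small coefficients on S
  have hKev : ∀ᶠ k in atTop,
      (∀ n ∈ S, ‖(inner 𝕜 (e k) (φ n) : 𝕜)‖ ^ 2 < ε2 / (S.card + 1)) ∧ 1 ≤ k := by
    refine Filter.Eventually.and ?_ (eventually_ge_atTop 1)
    rw [Filter.eventually_all_finset]
    intro n _
    have hsumk : Summable fun k => ‖(inner 𝕜 (e k) (φ n) : 𝕜)‖ ^ 2 :=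
      horth.inner_products_summable _
    exact (tendsto_order.1 hsumk.tendsto_atTop_zero).2 _ (by positivity)
  obtain ⟨K, hK1, hK2⟩ := hKev.exists
  have hK0 : (0 : ℕ) ≠ K := by omega
  set bb : ℕ → ℝ := fun n => ‖(inner 𝕜 (e K) (φ n) : 𝕜)‖ ^ 2 with hbb
  refine ⟨e 0 + e K, e 0 - e K, ?_, ?_⟩
  · -- lower bound on the quotient distance
    intro α hα
    have hdecomp : (e 0 + e K) - α • (e 0 - e K) = (1 - α) • e 0 + (1 + α) • e K := by
      rw [smul_sub, sub_smul, add_smul, one_smul, one_smul]; abel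
    have hinner0 : (inner 𝕜 ((1 - α) • e 0) ((1 + α) • e K) : 𝕜) = 0 := by
      rw [inner_smul_left, inner_smul_right, horth.2 hK0]
      ring
    have hnormsq : ‖(e 0 + e K) - α • (e 0 - e K)‖ ^ 2
        = ‖(1 - α)‖ ^ 2 + ‖(1 + α)‖ ^ 2 := by
      rw [hdecomp, @norm_add_sq 𝕜, hinner0, norm_smul, norm_smul, hnorm_e, hnorm_e]
      simp
    have htri : (2 : ℝ) ≤ ‖(1 - α)‖ + ‖(1 + α)‖ := by
      have h := norm_add_le (1 - α) (1 + α)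
      rw [show (1 - α) + (1 + α) = (2 : 𝕜) by ring] at h
      simpa using h
    have h1 : (1 : ℝ) ≤ ‖(e 0 + e K) - α • (e 0 - e K)‖ ^ 2 := by
      rw [hnormsq]
      nlinarith [norm_nonneg (1 - α), norm_nonneg (1 + α),
        sq_nonneg (‖(1 - α)‖ - ‖(1 + α)‖)]
    nlinarith [norm_nonneg ((e 0 + e K) - α • (e 0 - e K))]
  · -- upper bound on the measurement distance
    set T : ℕ → ℝ := fun n =>
      (‖(inner 𝕜 (e 0 + e K) (φ n) : 𝕜)‖ - ‖(inner 𝕜 (e 0 - e K) (φ n) : 𝕜)‖) ^ 2 with hT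
    set hfun : ℕ → ℝ := fun n =>
      4 * min (‖(inner 𝕜 (e 0) (φ n) : 𝕜)‖ ^ 2) (‖(inner 𝕜 (e K) (φ n) : 𝕜)‖ ^ 2) with hh
    have hTle : ∀ n, T n ≤ hfun n := by
      intro n
      have := aux_minsq (inner 𝕜 (e 0) (φ n) : 𝕜) (inner 𝕜 (e K) (φ n) : 𝕜)
      simpa [hT, hh, inner_add_left, inner_sub_left] using this
    have hh_le_a : ∀ n, hfun n ≤ 4 * a n := fun n => by
      have := min_le_left (‖(inner 𝕜 (e 0) (φ n) : 𝕜)‖ ^ 2) (‖(inner 𝕜 (e K) (φ n) : 𝕜)‖ ^ 2)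
      simp only [hh, ha]; nlinarith
    have hh_le_b : ∀ n, hfun n ≤ 4 * bb n := fun n => by
      have := min_le_right (‖(inner 𝕜 (e 0) (φ n) : 𝕜)‖ ^ 2) (‖(inner 𝕜 (e K) (φ n) : 𝕜)‖ ^ 2)
      simp only [hh, hbb]; nlinarith
    have hh_nonneg : ∀ n, 0 ≤ hfun n := fun n => by
      simp only [hh]; positivity
    have hsum_h : Summable hfun :=
      Summable.of_nonneg_of_le hh_nonneg hh_le_a (hsum_a.mul_left 4)
    have hsum_T : Summable T :=
      Summable.of_nonneg_of_le (fun n => sq_nonneg _) hTle hsum_h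
    have h4a : Summable fun n => 4 * a n := hsum_a.mul_left 4
    have key : ∑' n, T n < 8 * ε2 := by
      have h1 : ∑' n, T n ≤ ∑' n, hfun n := Summable.tsum_le_tsum hTle hsum_T hsum_h
      have hsplit : (∑ n ∈ S, hfun n) + ∑' n : ↑(S : Set ℕ)ᶜ, hfun n = ∑' n, hfun n :=
        Summable.sum_add_tsum_compl hsum_h
      have hpart1 : ∑ n ∈ S, hfun n < 4 * ε2 := by
        have hcard : ∀ n ∈ S, hfun n ≤ 4 * (ε2 / (S.card + 1)) := by
          intro n hn
          have h5 : bb n < ε2 / (S.card + 1) := hK1 n hn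
          exact le_trans (hh_le_b n) (by linarith)
        have hpos : (0 : ℝ) < (S.card : ℝ) + 1 := by
          have : (0:ℝ) ≤ (S.card : ℝ) := Nat.cast_nonneg _
          linarith
        have hstep : ∑ n ∈ S, hfun n ≤ (S.card : ℝ) * (4 * (ε2 / ((S.card : ℝ) + 1))) := by
          calc ∑ n ∈ S, hfun n ≤ ∑ _n ∈ S, 4 * (ε2 / ((S.card : ℝ) + 1)) :=
                Finset.sum_le_sum hcard
            _ = (S.card : ℝ) * (4 * (ε2 / ((S.card : ℝ) + 1))) := by
                rw [Finset.sum_const, nsmul_eq_mul]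
        have hinv : ((S.card : ℝ) + 1) * ((S.card : ℝ) + 1)⁻¹ = 1 :=
          mul_inv_cancel₀ (ne_of_gt hpos)
        have hinvpos : (0 : ℝ) < ((S.card : ℝ) + 1)⁻¹ := inv_pos.2 hpos
        have hfrac : (S.card : ℝ) * (4 * (ε2 / ((S.card : ℝ) + 1))) < 4 * ε2 := by
          rw [div_eq_mul_inv]
          nlinarith [mul_pos hε2pos hinvpos]
        linarith
      have hpart2 : ∑' n : ↑(S : Set ℕ)ᶜ, hfun n ≤ 4 * ε2 := by
        have hle : ∑' n : ↑(S : Set ℕ)ᶜ, hfun n ≤ ∑' n : ↑(S : Set ℕ)ᶜ, 4 * a n :=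
          Summable.tsum_le_tsum (fun n => hh_le_a n) (hsum_h.subtype _) (h4a.subtype _)
        have heq : ∑' n : ↑(S : Set ℕ)ᶜ, 4 * a n = 4 * ∑' n : ↑(S : Set ℕ)ᶜ, a n := by
          exact tsum_mul_left
        have hta : ∑' n : ↑(S : Set ℕ)ᶜ, a n < ε2 := hS
        rw [heq] at hle
        linarith
      linarith [h1, hsplit]
    have hlt : ∑' n, T n < δ ^ 2 := by
      have : 8 * ε2 = δ ^ 2 / 2 := by rw [hε2]; ring
      linarith
    calc Real.sqrt (∑' n, T n) < Real.sqrt (δ ^ 2) := by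
          apply Real.sqrt_lt_sqrt (tsum_nonneg fun n => sq_nonneg _) hlt
      _ = δ := Real.sqrt_sq hδ.le
end

section
/- Let H be an infinite-dimensional separable Hilbert space. Then no frame Φ = {φ_n}_{n∈ℕ} for H has the σ-strong complement property, for any σ > 0. That is, for every frame Φ for H and every σ > 0 there exists a subset S ⊆ ℕ such that neither {φ_n}_{n∈S} nor {φ_n}_{n∉S} is a frame for H with lower frame bound at least σ. -/
/-- No frame for an infinite-dimensional separable Hilbert space has the
`σ`-strong complement property, for any `σ > 0`: there is always a subset `S ⊆ ℕ` such that
neither `{φ n}_{n ∈ S}` nor `{φ n}_{n ∉ S}` has lower frame bound at least `σ`. -/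
theorem no_strong_complement_property_infinite_dim
    {𝕜 H : Type*} [RCLike 𝕜] [NormedAddCommGroup H] [InnerProductSpace 𝕜 H]
    [CompleteSpace H] [TopologicalSpace.SeparableSpace H]
    (hinf : ¬ FiniteDimensional 𝕜 H)
    (φ : ℕ → H) (A B : ℝ) (hA : 0 < A) (hAB : A ≤ B)
    (hframe : ∀ f : H, ∃ s : ℝ,
      HasSum (fun n => ‖(inner 𝕜 f (φ n) : 𝕜)‖ ^ 2) s ∧ A * ‖f‖ ^ 2 ≤ s ∧ s ≤ B * ‖f‖ ^ 2)
    (σ : ℝ) (hσ : 0 < σ) :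
    ∃ S : Set ℕ,
      ¬ (∀ f : H, σ * ‖f‖ ^ 2 ≤ ∑' n : S, ‖(inner 𝕜 f (φ (n : ℕ)) : 𝕜)‖ ^ 2) ∧
      ¬ (∀ f : H, σ * ‖f‖ ^ 2 ≤ ∑' n : ↥Sᶜ, ‖(inner 𝕜 f (φ (n : ℕ)) : 𝕜)‖ ^ 2) := by
  classical
  -- H is nontrivial
  have hnt : Nontrivial H := by
    by_contra h
    rw [not_nontrivial_iff_subsingleton] at h
    exact hinf inferInstance
  obtain ⟨f₀, hf₀⟩ := exists_ne (0 : H)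
  have hnorm : 0 < ‖f₀‖ ^ 2 := pow_pos (norm_pos_iff.2 hf₀) 2
  -- pick a finite set T capturing most of the energy of f₀
  have htend := tendsto_tsum_compl_atTop_zero (fun n => ‖(inner 𝕜 f₀ (φ n) : 𝕜)‖ ^ 2)
  have := (tendsto_order.1 htend).2 _ (mul_pos hσ hnorm)
  obtain ⟨T, hT⟩ := this.exists
  refine ⟨↑T, ?_, ?_⟩
  · -- take f ⟂ span of {φ n : n ∈ T}
    intro hcon
    set K : Submodule 𝕜 H := Submodule.span 𝕜 (φ '' ↑T)
    have hKfin : FiniteDimensional 𝕜 K :=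
      FiniteDimensional.span_of_finite 𝕜 (T.finite_toSet.image φ)
    have hKne : K ≠ ⊤ := by
      intro h
      have htop : FiniteDimensional 𝕜 (⊤ : Submodule 𝕜 H) := h ▸ hKfin
      exact hinf (Submodule.topEquiv (R := 𝕜) (M := H)).finiteDimensional
    have hKbot : Kᗮ ≠ ⊥ := by
      intro h
      exact hKne (Submodule.orthogonal_eq_bot_iff.1 h)
    obtain ⟨g, hgK, hg0⟩ := Submodule.exists_mem_ne_zero_of_ne_bot hKbot
    have hzero : ∀ n ∈ T, (inner 𝕜 g (φ n) : 𝕜) = 0 := by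
      intro n hn
      have : (inner 𝕜 (φ n) g : 𝕜) = 0 :=
        hgK (φ n) (Submodule.subset_span ⟨n, hn, rfl⟩)
      rw [← inner_conj_symm, this, map_zero]
    have := hcon g
    have hsum0 : (∑' n : (↑T : Set ℕ), ‖(inner 𝕜 g (φ (n : ℕ)) : 𝕜)‖ ^ 2) = 0 := by
      have : (fun n : (↑T : Set ℕ) => ‖(inner 𝕜 g (φ (n : ℕ)) : 𝕜)‖ ^ 2) = fun _ => 0 := by
        funext n
        rw [hzero n n.2]
        simp
      rw [this, tsum_zero]
    rw [hsum0] at this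
    have : σ * ‖g‖ ^ 2 > 0 := mul_pos hσ (pow_pos (norm_pos_iff.2 hg0) 2)
    linarith [hcon g, hsum0 ▸ hcon g]
  · -- f₀ violates the complement bound
    intro hcon
    have := hcon f₀
    have heq : (∑' n : ↥((↑T : Set ℕ)ᶜ), ‖(inner 𝕜 f₀ (φ (n : ℕ)) : 𝕜)‖ ^ 2)
        = ∑' n : { x // x ∉ T }, ‖(inner 𝕜 f₀ (φ (n : ℕ)) : 𝕜)‖ ^ 2 := rfl
    rw [heq] at this
    linarith
end

section
/- Let H be an infinite-dimensional separable Hilbert space and let Φ = {φ_n}_{n∈ℕ} be a frame for H with frame bounds 0 < A ≤ B < ∞. For each m ∈ ℕ let V_m be a finite-dimensional subspace of H with dim(V_{m+1}) > dim(V_m), and suppose there is an increasing function G: ℕ → (0,∞) with G(m) → ∞ such that for every m and every f, g ∈ V_m: inf_{|α|=1} ‖f − αg‖ ≤ G(m) ‖A_Φ(f) − A_Φ(g)‖. Fix γ > 1 and R > 0, and let B_γ(R) = {f ∈ H : ‖f − P_m f‖ ≤ G(m+1)^{−γ} R ‖f‖ for every m ∈ ℕ}, where P_m is the orthogonal projection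 onto V_m. Then there is a constant C, depending only on B, R, γ and G(1), such that for every f, g ∈ B_γ(R): inf_{|α|=1} ‖f − αg‖ ≤ C (‖f‖ + ‖g‖)^{1/γ} · ‖A_Φ(f) − A_Φ(g)‖^{(γ−1)/γ}. -/
open Filter Topology
open scoped ENNReal

/-- Hölder-type stability of phase retrieval on the set `B_γ(R)` of signals
well approximated by the finite-dimensional subspaces `V m`: if phase retrieval on each
`V m` is stable with constant `G m`, then for `f, g ∈ B_γ(R)`,
`inf_{|α|=1} ‖f - α g‖ ≤ C (‖f‖ + ‖g‖)^{1/γ} ‖A_Φ(f) - A_Φ(g)‖^{(γ-1)/γ}`. -/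
theorem holder_stability_on_approximable_signals
    {𝕜 H : Type*} [RCLike 𝕜] [NormedAddCommGroup H] [InnerProductSpace 𝕜 H]
    [CompleteSpace H] [TopologicalSpace.SeparableSpace H]
    (hinf : ¬ FiniteDimensional 𝕜 H)
    (φ : ℕ → H) (A B : ℝ) (hA : 0 < A) (hAB : A ≤ B)
    (hframe : ∀ f : H, ∃ s : ℝ,
      HasSum (fun n => ‖(inner 𝕜 f (φ n) : 𝕜)‖ ^ 2) s ∧ A * ‖f‖ ^ 2 ≤ s ∧ s ≤ B * ‖f‖ ^ 2)
    (V : ℕ → Submodule 𝕜 H) [∀ m, FiniteDimensional 𝕜 (V m)]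
    (hVdim : ∀ m, Module.finrank 𝕜 (V m) < Module.finrank 𝕜 (V (m + 1)))
    (G : ℕ → ℝ) (hGpos : ∀ m, 0 < G m) (hGmono : Monotone G)
    (hGtop : Filter.Tendsto G Filter.atTop Filter.atTop)
    (hG : ∀ m, ∀ f ∈ V m, ∀ g ∈ V m,
      (⨅ α : Metric.sphere (0 : 𝕜) 1, ‖f - (α : 𝕜) • g‖) ≤
        G m * Real.sqrt (∑' n, (‖(inner 𝕜 f (φ n) : 𝕜)‖ - ‖(inner 𝕜 g (φ n) : 𝕜)‖) ^ 2))
    (γ R : ℝ) (hγ : 1 < γ) (hR : 0 < R) :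
    ∃ C : ℝ, ∀ f g : H,
      (∀ m, ‖f - (Submodule.orthogonalProjection (V m) f : H)‖ ≤ G (m + 1) ^ (-γ) * R * ‖f‖) →
      (∀ m, ‖g - (Submodule.orthogonalProjection (V m) g : H)‖ ≤ G (m + 1) ^ (-γ) * R * ‖g‖) →
      (⨅ α : Metric.sphere (0 : 𝕜) 1, ‖f - (α : 𝕜) • g‖) ≤
        C * (‖f‖ + ‖g‖) ^ (1 / γ) *
          Real.sqrt (∑' n, (‖(inner 𝕜 f (φ n) : 𝕜)‖ - ‖(inner 𝕜 g (φ n) : 𝕜)‖) ^ 2)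
            ^ ((γ - 1) / γ) := by
  classical
  haveI : Nonempty (Metric.sphere (0 : 𝕜) 1) := ⟨⟨1, by simp⟩⟩
  have hγ0 : (0:ℝ) < γ := lt_trans one_pos hγ
  have hB0 : (0:ℝ) < B := lt_of_lt_of_le hA hAB
  have hsB : (0:ℝ) ≤ Real.sqrt B := Real.sqrt_nonneg B
  -- membership in ℓ²
  have hmem : ∀ f : H, Memℓp (fun n => ‖(inner 𝕜 f (φ n) : 𝕜)‖) (2 : ℝ≥0∞) := by
    intro f
    obtain ⟨s, hs, -, -⟩ := hframe f
    apply memℓp_gen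
    have h2 : ((2:ℝ≥0∞)).toReal = 2 := by simp
    rw [h2]
    simpa [Real.rpow_natCast, Real.norm_eq_abs, sq_abs] using hs.summable
  set U : H → lp (fun _ : ℕ => ℝ) 2 := fun f => ⟨fun n => ‖(inner 𝕜 f (φ n) : 𝕜)‖, hmem f⟩ with hU
  -- norm formula in ℓ²
  have hnorm : ∀ x : lp (fun _ : ℕ => ℝ) 2, ‖x‖ = Real.sqrt (∑' n, (x n) ^ 2) := by
    intro x
    rw [lp.norm_eq_tsum_rpow (by norm_num) x, Real.sqrt_eq_rpow]
    norm_num [Real.rpow_natCast, Real.norm_eq_abs, sq_abs]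
  have hUapp : ∀ (a b : H) (n : ℕ),
      (U a - U b : lp (fun _ : ℕ => ℝ) 2) n
        = ‖(inner 𝕜 a (φ n) : 𝕜)‖ - ‖(inner 𝕜 b (φ n) : 𝕜)‖ := by
    intro a b n
    simp [hU, lp.coeFn_sub, Pi.sub_apply]; rfl
  have hUe : ∀ a b : H,
      Real.sqrt (∑' n, (‖(inner 𝕜 a (φ n) : 𝕜)‖ - ‖(inner 𝕜 b (φ n) : 𝕜)‖) ^ 2)
        = ‖U a - U b‖ := by
    intro a b
    rw [hnorm]
    exact congrArg Real.sqrt (tsum_congr fun n => by rw [hUapp])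
  -- summability of the squared difference
  have hsq : ∀ a b : H,
      Summable (fun n => ((U a - U b : lp (fun _ : ℕ => ℝ) 2) n) ^ 2) := by
    intro a b
    have hs := ((hmem a).sub (hmem b)).summable (p := 2) (by norm_num)
    have h2 : ((2:ℝ≥0∞)).toReal = 2 := by simp
    rw [h2] at hs
    have heq : (fun n => ‖((fun n => ‖(inner 𝕜 a (φ n) : 𝕜)‖) - fun n => ‖(inner 𝕜 b (φ n) : 𝕜)‖) n‖ ^ (2:ℝ))
        = fun n => ((U a - U b : lp (fun _ : ℕ => ℝ) 2) n) ^ 2 := by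
      funext n
      rw [hUapp]
      simp [Real.rpow_natCast, Real.norm_eq_abs, sq_abs]
    rwa [heq] at hs
  -- frame upper bound: Lipschitz property of U
  have hLip : ∀ a b : H, ‖U a - U b‖ ≤ Real.sqrt B * ‖a - b‖ := by
    intro a b
    obtain ⟨s, hs, -, hsB'⟩ := hframe (a - b)
    rw [hnorm]
    have h1 : (∑' n, ((U a - U b : lp (fun _ : ℕ => ℝ) 2) n) ^ 2)
        ≤ ∑' n, ‖(inner 𝕜 (a - b) (φ n) : 𝕜)‖ ^ 2 := by
      refine Summable.tsum_le_tsum ?_ (hsq a b) hs.summable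
      intro n
      rw [hUapp]
      have hab : (inner 𝕜 (a - b) (φ n) : 𝕜) = inner 𝕜 a (φ n) - inner 𝕜 b (φ n) :=
        inner_sub_left _ _ _
      have h2 := abs_norm_sub_norm_le (inner 𝕜 a (φ n) : 𝕜) (inner 𝕜 b (φ n) : 𝕜)
      rw [← hab] at h2
      exact sq_le_sq' (neg_le_of_abs_le h2) (le_of_abs_le h2)
    have h2 : (∑' n, ‖(inner 𝕜 (a - b) (φ n) : 𝕜)‖ ^ 2) ≤ B * ‖a - b‖ ^ 2 := by
      rw [hs.tsum_eq]; exact hsB'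
    calc Real.sqrt (∑' n, ((U a - U b : lp (fun _ : ℕ => ℝ) 2) n) ^ 2)
        ≤ Real.sqrt (B * ‖a - b‖ ^ 2) := Real.sqrt_le_sqrt (h1.trans h2)
      _ = Real.sqrt B * ‖a - b‖ := by
          rw [Real.sqrt_mul hB0.le, Real.sqrt_sq (norm_nonneg _)]
  -- notation for the infimum
  set I : H → H → ℝ := fun a b => ⨅ α : Metric.sphere (0 : 𝕜) 1, ‖a - (α : 𝕜) • b‖ with hI
  have hIbdd : ∀ a b : H, BddBelow (Set.range fun α : Metric.sphere (0 : 𝕜) 1 => ‖a - (α : 𝕜) • b‖) := by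
    intro a b
    exact ⟨0, by rintro x ⟨α, rfl⟩; positivity⟩
  -- stability on V m in terms of U
  have hGU : ∀ m, ∀ a ∈ V m, ∀ b ∈ V m, I a b ≤ G m * ‖U a - U b‖ := by
    intro m a ha b hb
    rw [← hUe]
    exact hG m a ha b hb
  -- key estimate at level m
  have key : ∀ (f g : H)
      (_ : ∀ m, ‖f - (Submodule.orthogonalProjection (V m) f : H)‖ ≤ G (m + 1) ^ (-γ) * R * ‖f‖)
      (_ : ∀ m, ‖g - (Submodule.orthogonalProjection (V m) g : H)‖ ≤ G (m + 1) ^ (-γ) * R * ‖g‖)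
      (m : ℕ),
      I f g ≤ G m * ‖U f - U g‖
        + (G m * Real.sqrt B + 1) * (G (m + 1) ^ (-γ) * R * (‖f‖ + ‖g‖)) := by
    intro f g hf hg m
    set Pf : H := (Submodule.orthogonalProjection (V m) f : H) with hPf
    set Pg : H := (Submodule.orthogonalProjection (V m) g : H) with hPg
    have hPfm : Pf ∈ V m := SetLike.coe_mem _
    have hPgm : Pg ∈ V m := SetLike.coe_mem _
    have hdf : ‖f - Pf‖ ≤ G (m + 1) ^ (-γ) * R * ‖f‖ := hf m
    have hdg : ‖g - Pg‖ ≤ G (m + 1) ^ (-γ) * R * ‖g‖ := hg m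
    have step1 : I f g ≤ I Pf Pg + (‖f - Pf‖ + ‖g - Pg‖) := by
      rw [hI]
      rw [ciInf_add (hIbdd Pf Pg)]
      refine ciInf_mono (hIbdd f g) ?_
      intro α
      have hα : ‖(α : 𝕜)‖ = 1 := by
        have hm := α.2
        rwa [mem_sphere_zero_iff_norm] at hm
      have hspl : f - (α : 𝕜) • g = (Pf - (α : 𝕜) • Pg) + (f - Pf) - (α : 𝕜) • (g - Pg) := by
        rw [smul_sub]; abel
      rw [hspl]
      calc ‖(Pf - (α : 𝕜) • Pg) + (f - Pf) - (α : 𝕜) • (g - Pg)‖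
          ≤ ‖(Pf - (α : 𝕜) • Pg) + (f - Pf)‖ + ‖(α : 𝕜) • (g - Pg)‖ := norm_sub_le _ _
        _ ≤ ‖Pf - (α : 𝕜) • Pg‖ + ‖f - Pf‖ + ‖(α : 𝕜) • (g - Pg)‖ := by
            gcongr; exact norm_add_le _ _
        _ = ‖Pf - (α : 𝕜) • Pg‖ + (‖f - Pf‖ + ‖g - Pg‖) := by
            rw [norm_smul, hα, one_mul]; ring
    have step2 : I Pf Pg ≤ G m * ‖U Pf - U Pg‖ := hGU m Pf hPfm Pg hPgm
    have step3 : ‖U Pf - U Pg‖ ≤ ‖U f - U g‖ + Real.sqrt B * (‖f - Pf‖ + ‖g - Pg‖) := by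
      have h4 : ‖U Pf - U Pg‖ ≤ ‖U Pf - U f‖ + ‖U f - U g‖ + ‖U g - U Pg‖ := by
        have hd := dist_triangle4 (U Pf) (U f) (U g) (U Pg)
        simpa [dist_eq_norm] using hd
      have h5 : ‖U Pf - U f‖ ≤ Real.sqrt B * ‖f - Pf‖ := by
        have hl := hLip Pf f
        rwa [norm_sub_rev Pf f] at hl
      have h6 : ‖U g - U Pg‖ ≤ Real.sqrt B * ‖g - Pg‖ := hLip g Pg
      calc ‖U Pf - U Pg‖ ≤ ‖U Pf - U f‖ + ‖U f - U g‖ + ‖U g - U Pg‖ := h4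
        _ ≤ Real.sqrt B * ‖f - Pf‖ + ‖U f - U g‖ + Real.sqrt B * ‖g - Pg‖ := by gcongr
        _ = ‖U f - U g‖ + Real.sqrt B * (‖f - Pf‖ + ‖g - Pg‖) := by ring
    have hD : ‖f - Pf‖ + ‖g - Pg‖ ≤ G (m + 1) ^ (-γ) * R * (‖f‖ + ‖g‖) := by
      calc ‖f - Pf‖ + ‖g - Pg‖ ≤ G (m + 1) ^ (-γ) * R * ‖f‖ + G (m + 1) ^ (-γ) * R * ‖g‖ :=
            add_le_add hdf hdg
        _ = G (m + 1) ^ (-γ) * R * (‖f‖ + ‖g‖) := by ring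
    have hGm : (0:ℝ) < G m := hGpos m
    calc I f g ≤ I Pf Pg + (‖f - Pf‖ + ‖g - Pg‖) := step1
      _ ≤ G m * (‖U f - U g‖ + Real.sqrt B * (‖f - Pf‖ + ‖g - Pg‖))
            + (‖f - Pf‖ + ‖g - Pg‖) := by
          have h7 : G m * ‖U Pf - U Pg‖
              ≤ G m * (‖U f - U g‖ + Real.sqrt B * (‖f - Pf‖ + ‖g - Pg‖)) := by gcongr
          linarith [step2.trans h7]
      _ = G m * ‖U f - U g‖ + (G m * Real.sqrt B + 1) * (‖f - Pf‖ + ‖g - Pg‖) := by ring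
      _ ≤ G m * ‖U f - U g‖
            + (G m * Real.sqrt B + 1) * (G (m + 1) ^ (-γ) * R * (‖f‖ + ‖g‖)) := by
          gcongr
  -- the constant
  refine ⟨max (G 1 ^ (γ - 1)) (1 + Real.sqrt B * R + R / G 1), ?_⟩
  intro f g hf hg
  set C : ℝ := max (G 1 ^ (γ - 1)) (1 + Real.sqrt B * R + R / G 1) with hC
  set N : ℝ := ‖f‖ + ‖g‖ with hN
  set ε : ℝ := ‖U f - U g‖ with hε
  have hε0 : 0 ≤ ε := norm_nonneg _
  have hN0 : 0 ≤ N := by positivity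
  have hC1 : G 1 ^ (γ - 1) ≤ C := le_max_left _ _
  have hC2 : 1 + Real.sqrt B * R + R / G 1 ≤ C := le_max_right _ _
  have hC0 : 0 ≤ C := le_trans (Real.rpow_nonneg (hGpos 1).le _) hC1
  rw [hUe f g]
  show I f g ≤ C * N ^ (1 / γ) * ε ^ ((γ - 1) / γ)
  have hkey : ∀ m, I f g ≤ G m * ε + (G m * Real.sqrt B + 1) * (G (m + 1) ^ (-γ) * R * N) := by
    intro m
    have hk := key f g hf hg m
    rw [← hN, ← hε] at hk
    exact hk
  rcases eq_or_lt_of_le hε0 with hε0' | hεpos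
  · -- ε = 0
    have hrhs : C * N ^ (1 / γ) * ε ^ ((γ - 1) / γ) = 0 := by
      rw [← hε0', Real.zero_rpow (ne_of_gt (div_pos (by linarith) hγ0)), mul_zero]
    rw [hrhs]
    have hGshift : Tendsto (fun m => G (m + 1)) atTop atTop :=
      hGtop.comp (tendsto_add_atTop_nat 1)
    have h1 : Tendsto (fun m => G (m + 1) ^ (1 - γ)) atTop (𝓝 0) :=
      ((tendsto_rpow_neg_atTop (by linarith : (0:ℝ) < γ - 1)).comp hGshift).congr
        (by intro m; simp [neg_sub])
    have h2 : Tendsto (fun m => G (m + 1) ^ (-γ)) atTop (𝓝 0) :=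
      (tendsto_rpow_neg_atTop hγ0).comp hGshift
    have hb : Tendsto (fun m => (Real.sqrt B * G (m+1) ^ (1 - γ) + G (m+1) ^ (-γ)) * (R * N))
        atTop (𝓝 0) := by
      have hc := ((h1.const_mul (Real.sqrt B)).add h2).mul_const (R * N)
      simpa using hc
    refine ge_of_tendsto hb (Filter.Eventually.of_forall ?_)
    intro m
    have hk := hkey m
    rw [← hε0'] at hk
    have hGm1 : (0:ℝ) < G (m+1) := hGpos (m+1)
    have hmono : G m * G (m + 1) ^ (-γ) ≤ G (m+1) ^ (1 - γ) := by
      have e : G (m+1) ^ (1 - γ) = G (m+1) * G (m+1) ^ (-γ) := by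
        rw [show (1 - γ) = 1 + -γ by ring, Real.rpow_add hGm1, Real.rpow_one]
      rw [e]
      exact mul_le_mul_of_nonneg_right (hGmono (Nat.le_succ m)) (Real.rpow_nonneg hGm1.le _)
    have hRN : (0:ℝ) ≤ R * N := by positivity
    calc I f g ≤ G m * 0 + (G m * Real.sqrt B + 1) * (G (m + 1) ^ (-γ) * R * N) := hk
      _ = (Real.sqrt B * (G m * G (m+1) ^ (-γ)) + G (m+1) ^ (-γ)) * (R * N) := by ring
      _ ≤ (Real.sqrt B * G (m+1) ^ (1 - γ) + G (m+1) ^ (-γ)) * (R * N) := by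
          apply mul_le_mul_of_nonneg_right _ hRN
          have := mul_le_mul_of_nonneg_left hmono hsB
          linarith
  · -- ε > 0
    have hNpos : 0 < N := by
      rcases lt_or_ge 0 N with h | h
      · exact h
      exfalso
      have hfn : ‖f‖ = 0 := by
        have h1 := norm_nonneg f; have h2 := norm_nonneg g
        rw [hN] at h; linarith
      have hgn : ‖g‖ = 0 := by
        have h1 := norm_nonneg f; have h2 := norm_nonneg g
        rw [hN] at h; linarith
      have hf0 : f = 0 := norm_eq_zero.mp hfn
      have hg0 : g = 0 := norm_eq_zero.mp hgn
      rw [hf0, hg0, sub_self, norm_zero] at hε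
      exact hεpos.ne' hε
    set t : ℝ := (N / ε) ^ (1 / γ) with ht
    have htpos : 0 < t := Real.rpow_pos_of_pos (by positivity) _
    have htγ : t ^ γ = N / ε := by
      rw [ht, ← Real.rpow_mul (by positivity : (0:ℝ) ≤ N / ε),
        one_div_mul_cancel (ne_of_gt hγ0), Real.rpow_one]
    have htinv : t ^ (-γ) * N = ε := by
      rw [Real.rpow_neg htpos.le, htγ]
      field_simp
    have htε : t * ε = N ^ (1/γ) * ε ^ ((γ-1)/γ) := by
      have h1 : t = N ^ (1/γ) * ε ^ (-(1/γ)) := by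
        rw [ht, Real.div_rpow hN0 hεpos.le, Real.rpow_neg hεpos.le, div_eq_mul_inv]
      have h2 : ε ^ (-(1/γ)) * ε = ε ^ ((γ-1)/γ) := by
        rw [show (γ-1)/γ = -(1/γ) + 1 by field_simp; ring, Real.rpow_add hεpos, Real.rpow_one]
      calc t * ε = N ^ (1/γ) * (ε ^ (-(1/γ)) * ε) := by rw [h1]; ring
        _ = N ^ (1/γ) * ε ^ ((γ-1)/γ) := by rw [h2]
    rcases le_total t (G 1) with hcase | hcase
    · -- t ≤ G 1 : trivial bound
      have hfg : I f g ≤ N := by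
        have hle := ciInf_le (hIbdd f g) (⟨1, by simp⟩ : Metric.sphere (0 : 𝕜) 1)
        have hle2 : ‖f - ((⟨1, by simp⟩ : Metric.sphere (0 : 𝕜) 1) : 𝕜) • g‖ ≤ N := by
          simpa [one_smul] using norm_sub_le f g
        exact le_trans hle hle2
      have hNε : N ≤ G 1 ^ γ * ε := by
        have h4 : t ^ γ ≤ G 1 ^ γ := Real.rpow_le_rpow htpos.le hcase hγ0.le
        rw [htγ, div_le_iff₀ hεpos] at h4
        exact h4
      have hsplit : N = N ^ (1/γ) * N ^ ((γ-1)/γ) := by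
        rw [← Real.rpow_add hNpos, show 1/γ + (γ-1)/γ = 1 by field_simp; ring, Real.rpow_one]
      have h5 : N ^ ((γ-1)/γ) ≤ (G 1 ^ γ * ε) ^ ((γ-1)/γ) :=
        Real.rpow_le_rpow hN0 hNε (div_nonneg (by linarith) hγ0.le)
      have h6 : (G 1 ^ γ * ε) ^ ((γ-1)/γ) = G 1 ^ (γ-1) * ε ^ ((γ-1)/γ) := by
        rw [Real.mul_rpow (Real.rpow_nonneg (hGpos 1).le _) hε0,
          ← Real.rpow_mul (hGpos 1).le, show γ * ((γ-1)/γ) = γ - 1 by field_simp]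
      calc I f g ≤ N := hfg
        _ = N ^ (1/γ) * N ^ ((γ-1)/γ) := hsplit
        _ ≤ N ^ (1/γ) * (G 1 ^ (γ-1) * ε ^ ((γ-1)/γ)) := by
            rw [← h6]
            exact mul_le_mul_of_nonneg_left h5 (Real.rpow_nonneg hN0 _)
        _ = G 1 ^ (γ-1) * N ^ (1/γ) * ε ^ ((γ-1)/γ) := by ring
        _ ≤ C * N ^ (1/γ) * ε ^ ((γ-1)/γ) := by
            apply mul_le_mul_of_nonneg_right _ (Real.rpow_nonneg hε0 _)
            exact mul_le_mul_of_nonneg_right hC1 (Real.rpow_nonneg hN0 _)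
    · -- G 1 ≤ t : choose the optimal level
      obtain ⟨M, hM⟩ := Filter.eventually_atTop.mp (hGtop.eventually_gt_atTop t)
      set P : ℕ → Prop := fun m => G (m+1) ≤ t with hP
      set m0 := Nat.findGreatest P M with hm0
      have hm0P : P m0 := Nat.findGreatest_spec (Nat.zero_le M) hcase
      have hnext : t < G (m0 + 2) := by
        rcases le_or_gt (m0+1) M with h | h
        · have hnP := Nat.findGreatest_is_greatest (Nat.lt_succ_self m0) h
          rw [hP] at hnP
          exact lt_of_not_ge hnP
        · exact hM (m0+2) (by omega)
      have hk := hkey (m0 + 1)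
      have e1 : G (m0+1) * ε ≤ t * ε := mul_le_mul_of_nonneg_right hm0P hε0
      have e2 : G (m0+1+1) ^ (-γ) ≤ t ^ (-γ) :=
        Real.rpow_le_rpow_of_nonpos htpos hnext.le (by linarith)
      have e3 : (G (m0+1) * Real.sqrt B + 1) * (G (m0+1+1) ^ (-γ) * R * N)
          ≤ (t * Real.sqrt B + 1) * (t ^ (-γ) * R * N) := by
        apply mul_le_mul
        · have := mul_le_mul_of_nonneg_right hm0P hsB
          linarith
        · exact mul_le_mul_of_nonneg_right
            (mul_le_mul_of_nonneg_right e2 hR.le) hN0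
        · exact mul_nonneg (mul_nonneg (Real.rpow_nonneg (hGpos _).le _) hR.le) hN0
        · have := mul_nonneg htpos.le hsB
          linarith
      have e4 : (t * Real.sqrt B + 1) * (t ^ (-γ) * R * N)
          = Real.sqrt B * R * (t * ε) + R * ε := by
        calc (t * Real.sqrt B + 1) * (t ^ (-γ) * R * N)
            = Real.sqrt B * R * (t * (t ^ (-γ) * N)) + R * (t ^ (-γ) * N) := by ring
          _ = Real.sqrt B * R * (t * ε) + R * ε := by rw [htinv]
      have e5 : R * ε ≤ (R / G 1) * (t * ε) := by
        rw [div_mul_eq_mul_div, le_div_iff₀ (hGpos 1)]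
        have h8 : (R * ε) * G 1 ≤ (R * ε) * t :=
          mul_le_mul_of_nonneg_left hcase (mul_nonneg hR.le hε0)
        calc R * ε * G 1 ≤ R * ε * t := h8
          _ = R * (t * ε) := by ring
      have htε0 : 0 ≤ t * ε := mul_nonneg htpos.le hε0
      calc I f g ≤ G (m0+1) * ε + (G (m0+1) * Real.sqrt B + 1) * (G (m0+1+1) ^ (-γ) * R * N) := hk
        _ ≤ t * ε + (Real.sqrt B * R * (t * ε) + R * ε) := by
            rw [← e4]; exact add_le_add e1 e3
        _ ≤ t * ε + (Real.sqrt B * R * (t * ε) + (R / G 1) * (t * ε)) := by linarith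
        _ = (1 + Real.sqrt B * R + R / G 1) * (t * ε) := by ring
        _ ≤ C * (t * ε) := mul_le_mul_of_nonneg_right hC2 htε0
        _ = C * N ^ (1/γ) * ε ^ ((γ-1)/γ) := by rw [htε]; ring
end

section
/- Let H be an infinite-dimensional separable Hilbert space and let {φ_n}_{n∈ℕ} be a frame for H. Let V be a finite-dimensional subspace of H with dim(V) = M, and suppose the projected family {P_V φ_n}_{n∈ℕ} does phase retrieval for V. Then there exists a finite subset I ⊂ ℕ with |I| ≤ M² such that {P_V φ_n}_{n∈I} does phase retrieval for V. -/
open Module Submodule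

/-- From a possibly infinite family of evaluation points, extract finitely many
(at most `finrank W`) that determine vanishing of every element of `W`. -/
private lemma eval_extract (k : ℕ) (W : Submodule ℝ (ℕ → ℝ)) [FiniteDimensional ℝ W]
    (hW : Module.finrank ℝ W ≤ k) :
    ∃ I : Finset ℕ, I.card ≤ k ∧ ∀ w ∈ W, (∀ n ∈ I, w n = 0) → ∀ n, w n = 0 := by
  classical
  set ev : ℕ → Module.Dual ℝ W := fun n => (LinearMap.proj n).comp W.subtype with hev
  obtain ⟨t, hts, hspan, hli⟩ := exists_linearIndependent ℝ (Set.range ev)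
  have htfin : t.Finite := hli.set_finite_of_isNoetherian
  have hcard : htfin.toFinset.card ≤ k := by
    haveI := htfin.fintype
    have h2 := hli.fintype_card_le_finrank
    calc htfin.toFinset.card = Fintype.card t := htfin.card_toFinset
      _ ≤ Module.finrank ℝ (Module.Dual ℝ W) := h2
      _ = Module.finrank ℝ W := Subspace.dual_finrank_eq
      _ ≤ k := hW
  set c : Module.Dual ℝ W → ℕ := fun x => if h : ∃ n, ev n = x then h.choose else 0 with hc
  refine ⟨htfin.toFinset.image c, le_trans Finset.card_image_le hcard, ?_⟩
  intro w hw h0 n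
  -- the set of functionals vanishing at w
  have hsub : t ⊆ ↑(LinearMap.ker (Module.Dual.eval ℝ W ⟨w, hw⟩)) := by
    intro x hxt
    have hxr : ∃ m, ev m = x := hts hxt
    have hcx : ev (c x) = x := by
      rw [hc]; simp only [dif_pos hxr]; exact hxr.choose_spec
    have hmem : c x ∈ htfin.toFinset.image c :=
      Finset.mem_image.2 ⟨x, htfin.mem_toFinset.2 hxt, rfl⟩
    have : x ⟨w, hw⟩ = 0 := by
      rw [← hcx]; exact h0 _ hmem
    simpa [LinearMap.mem_ker, Module.Dual.eval] using this
  have hker : Submodule.span ℝ t ≤ LinearMap.ker (Module.Dual.eval ℝ W ⟨w, hw⟩) :=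
    Submodule.span_le.2 hsub
  have hn : ev n ∈ Submodule.span ℝ t := by
    rw [hspan]; exact Submodule.subset_span ⟨n, rfl⟩
  have := hker hn
  simpa [LinearMap.mem_ker, Module.Dual.eval, hev] using this

/-- Let `{φ n}_{n ∈ ℕ}` be a frame for an infinite-dimensional separable
Hilbert space `H`, and let `V ⊆ H` be a finite-dimensional subspace with `dim V = M`.
If the projected family `{P_V φ n}` does phase retrieval for `V` (equivalently, any `f ∈ V`
is determined up to phase by `(|⟨f, φ n⟩|)_n`, since `⟨f, P_V φ n⟩ = ⟨f, φ n⟩` for `f ∈ V`),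
then some finite subfamily indexed by `I ⊂ ℕ` with `|I| ≤ M²` does phase retrieval for `V`. -/
theorem finite_subfamily_phase_retrieval_on_subspace
    {𝕜 H : Type*} [RCLike 𝕜] [NormedAddCommGroup H] [InnerProductSpace 𝕜 H]
    [CompleteSpace H] [TopologicalSpace.SeparableSpace H]
    (hinf : ¬ FiniteDimensional 𝕜 H)
    (φ : ℕ → H) (A B : ℝ) (hA : 0 < A) (hAB : A ≤ B)
    (hframe : ∀ f : H, ∃ s : ℝ,
      HasSum (fun n => ‖(inner 𝕜 f (φ n) : 𝕜)‖ ^ 2) s ∧ A * ‖f‖ ^ 2 ≤ s ∧ s ≤ B * ‖f‖ ^ 2)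
    (V : Submodule 𝕜 H) [FiniteDimensional 𝕜 V] (M : ℕ)
    (hM : Module.finrank 𝕜 V = M)
    (hPR : ∀ f ∈ V, ∀ g ∈ V,
      (∀ n : ℕ, ‖(inner 𝕜 f (φ n) : 𝕜)‖ = ‖(inner 𝕜 g (φ n) : 𝕜)‖) →
      ∃ α : 𝕜, ‖α‖ = 1 ∧ f = α • g) :
    ∃ I : Finset ℕ, I.card ≤ M ^ 2 ∧
      ∀ f ∈ V, ∀ g ∈ V,
        (∀ n ∈ I, ‖(inner 𝕜 f (φ n) : 𝕜)‖ = ‖(inner 𝕜 g (φ n) : 𝕜)‖) →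
        ∃ α : 𝕜, ‖α‖ = 1 ∧ f = α • g := by
  classical
  let b : Basis (Fin M) 𝕜 V := Module.finBasisOfFinrankEq 𝕜 V hM
  let e : Fin M → H := fun i => (b i : H)
  let a : Fin M → ℕ → 𝕜 := fun i n => inner 𝕜 (e i) (φ n)
  let u : Fin M → Fin M → ℕ → 𝕜 :=
    fun i j n => a i n * (starRingEnd 𝕜) (a j n)
  let v : Fin M × Fin M → ℕ → ℝ := fun p n =>
    if p.1 ≤ p.2 then RCLike.re (u p.1 p.2 n) else RCLike.im (u p.1 p.2 n)
  set W : Submodule ℝ (ℕ → ℝ) := Submodule.span ℝ (Set.range v) with hWdef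
  have hWfd : FiniteDimensional ℝ W :=
    FiniteDimensional.span_of_finite ℝ (Set.finite_range v)
  have hWrank : Module.finrank ℝ W ≤ M ^ 2 := by
    refine (finrank_range_le_card v).trans ?_
    simp [Fintype.card_prod, sq]
  -- symmetry of u
  have hconj : ∀ i j n, (starRingEnd 𝕜) (u j i n) = u i j n := by
    intro i j n
    simp only [u, map_mul, RCLike.conj_conj]
    ring
  have hre : ∀ i j, (fun n => RCLike.re (u i j n)) ∈ W := by
    intro i j
    rcases le_total i j with hij | hij
    · have : (fun n => RCLike.re (u i j n)) = v (i, j) := by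
        funext n; simp [v, hij]
      rw [this]; exact Submodule.subset_span ⟨(i, j), rfl⟩
    · have : (fun n => RCLike.re (u i j n)) = v (j, i) := by
        funext n
        simp only [v, hij, if_pos]
        rw [← hconj j i n, RCLike.conj_re]
      rw [this]; exact Submodule.subset_span ⟨(j, i), rfl⟩
  have him : ∀ i j, (fun n => RCLike.im (u i j n)) ∈ W := by
    intro i j
    rcases lt_trichotomy i j with hij | hij | hij
    · have : (fun n => RCLike.im (u i j n)) = (-1 : ℝ) • v (j, i) := by
        funext n
        have hji : ¬ (j ≤ i) := not_le.2 hij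
        rw [Pi.smul_apply, show v (j, i) n = RCLike.im (u j i n) by simp [v, hji],
          ← hconj j i n, RCLike.conj_im, smul_eq_mul]
        ring
      rw [this]
      exact Submodule.smul_mem _ _ (Submodule.subset_span ⟨(j, i), rfl⟩)
    · subst hij
      have : (fun n => RCLike.im (u i i n)) = (0 : ℕ → ℝ) := by
        funext n
        simp only [u, RCLike.mul_conj, Pi.zero_apply, ← RCLike.ofReal_pow,
          RCLike.ofReal_im]
      rw [this]; exact Submodule.zero_mem _
    · have : (fun n => RCLike.im (u i j n)) = v (i, j) := by
        funext n; simp [v, not_le.2 hij]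
      rw [this]; exact Submodule.subset_span ⟨(i, j), rfl⟩
  -- main membership
  have key : ∀ f, ∀ hf : f ∈ V, (fun n => ‖(inner 𝕜 f (φ n) : 𝕜)‖ ^ 2) ∈ W := by
    intro f hf
    set c : Fin M → 𝕜 := fun i => b.repr ⟨f, hf⟩ i with hcdef
    have hfe : ∀ n, (inner 𝕜 f (φ n) : 𝕜) = ∑ i, (starRingEnd 𝕜) (c i) * a i n := by
      intro n
      have hsum : f = ∑ i, c i • e i := by
        have h1 : (⟨f, hf⟩ : V) = ∑ i, c i • b i := (b.sum_repr ⟨f, hf⟩).symm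
        have h2 := congrArg (Submodule.subtype V) h1
        simpa [e, Submodule.coe_sum] using h2
      rw [hsum, sum_inner]
      refine Finset.sum_congr rfl fun i _ => ?_
      rw [inner_smul_left]
    have hq : ∀ n, ‖(inner 𝕜 f (φ n) : 𝕜)‖ ^ 2 =
        ∑ i, ∑ j, (RCLike.re ((starRingEnd 𝕜) (c i) * c j) * RCLike.re (u i j n)
          - RCLike.im ((starRingEnd 𝕜) (c i) * c j) * RCLike.im (u i j n)) := by
      intro n
      have h1 : (‖(inner 𝕜 f (φ n) : 𝕜)‖ ^ 2 : ℝ)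
          = RCLike.re ((inner 𝕜 f (φ n) : 𝕜) * (starRingEnd 𝕜) (inner 𝕜 f (φ n) : 𝕜)) := by
        rw [RCLike.mul_conj, ← RCLike.ofReal_pow, RCLike.ofReal_re]
      have h2 : (inner 𝕜 f (φ n) : 𝕜) * (starRingEnd 𝕜) (inner 𝕜 f (φ n) : 𝕜)
          = ∑ i, ∑ j, ((starRingEnd 𝕜) (c i) * c j) * u i j n := by
        rw [hfe n, map_sum, Finset.sum_mul_sum]
        refine Finset.sum_congr rfl fun i _ => Finset.sum_congr rfl fun j _ => ?_
        simp only [map_mul, RCLike.conj_conj, u]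
        ring
      rw [h1, h2, map_sum]
      refine Finset.sum_congr rfl fun i _ => ?_
      rw [map_sum]
      exact Finset.sum_congr rfl fun j _ => RCLike.mul_re _ _
    have heq : (fun n => ‖(inner 𝕜 f (φ n) : 𝕜)‖ ^ 2) =
        ∑ i : Fin M, ∑ j : Fin M,
          (RCLike.re ((starRingEnd 𝕜) (c i) * c j) • (fun n => RCLike.re (u i j n))
            - RCLike.im ((starRingEnd 𝕜) (c i) * c j) • (fun n => RCLike.im (u i j n))) := by
      funext n
      rw [hq n]
      simp [Finset.sum_apply]
    rw [heq]
    exact Submodule.sum_mem _ fun i _ => Submodule.sum_mem _ fun j _ =>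
      sub_mem (Submodule.smul_mem _ _ (hre i j)) (Submodule.smul_mem _ _ (him i j))
  obtain ⟨I, hIcard, hI⟩ := eval_extract (M ^ 2) W hWrank
  refine ⟨I, hIcard, ?_⟩
  intro f hf g hg h
  have hw : ((fun n => ‖(inner 𝕜 f (φ n) : 𝕜)‖ ^ 2)
      - (fun n => ‖(inner 𝕜 g (φ n) : 𝕜)‖ ^ 2)) ∈ W := sub_mem (key f hf) (key g hg)
  have h0 : ∀ n ∈ I, ((fun n => ‖(inner 𝕜 f (φ n) : 𝕜)‖ ^ 2)
      - (fun n => ‖(inner 𝕜 g (φ n) : 𝕜)‖ ^ 2)) n = 0 := by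
    intro n hn
    simp [Pi.sub_apply, h n hn]
  have hall := hI _ hw h0
  refine hPR f hf g hg fun n => ?_
  have hn := hall n
  simp only [Pi.sub_apply, sub_eq_zero] at hn
  nlinarith [norm_nonneg ((inner 𝕜 f (φ n) : 𝕜)), norm_nonneg ((inner 𝕜 g (φ n) : 𝕜))]
end

section
/- Let f, g ∈ ℂ^N with ‖f‖ ≥ ‖g‖. Then the operator norm of the Hermitian rank-≤2 matrix ff* − gg* equals (1/2)(‖f‖² − ‖g‖² + ((‖f‖² + ‖g‖²)² − 4|⟨f,g⟩|²)^{1/2}); in particular, the largest (in absolute value) eigenvalue of ff* − gg* is this quantity. -/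
open scoped InnerProductSpace ComplexConjugate

section Aux
variable {N : ℕ}

private 
lemma key_real (a b C lam U V X R : ℝ)
    (ha : 0 ≤ a) (hb : 0 ≤ b) (hC : 0 ≤ C) (hX : 0 ≤ X)
    (hU : 0 ≤ U) (hV : 0 ≤ V)
    (hR : R ≤ C * U * V)
    (hgram : b * U ^ 2 + a * V ^ 2 - 2 * R ≤ (a * b - C ^ 2) * X)
    (hUX : U ^ 2 ≤ a * X) (hVX : V ^ 2 ≤ b * X)
    (hlam : 0 ≤ lam) (hD : 0 ≤ lam + b - a)
    (hCeq : C ^ 2 = (lam + b) * (a - lam)) :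
    U ^ 2 - V ^ 2 ≤ lam * X := by
  rcases eq_or_lt_of_le hD with hD0 | hDpos
  · -- lam + b = a
    rcases eq_or_lt_of_le hb with hb0 | hbpos
    · -- b = 0, a = lam
      nlinarith [hUX, sq_nonneg V]
    · -- b > 0 : C^2 = a*b, gram forces b*U^2 = a*V^2
      have hCab : C ^ 2 = a * b := by nlinarith
      have h1 : b * U ^ 2 + a * V ^ 2 - 2 * C * U * V ≤ 0 := by nlinarith
      have hS : 0 ≤ b * U ^ 2 + a * V ^ 2 := by positivity
      have h3 : (b * U ^ 2 + a * V ^ 2) ^ 2 ≤ (2 * C * U * V) ^ 2 := by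
        have h3' : b * U ^ 2 + a * V ^ 2 ≤ 2 * C * U * V := by linarith
        nlinarith
      have hcc : 4 * C ^ 2 * U ^ 2 * V ^ 2 = 4 * a * b * U ^ 2 * V ^ 2 := by
        rw [hCab]; ring
      have h4 : (b * U ^ 2 - a * V ^ 2) ^ 2 ≤ 0 := by nlinarith [h3, hcc]
      have h6 : (b * U ^ 2 - a * V ^ 2) ^ 2 = 0 := le_antisymm h4 (sq_nonneg _)
      have h2 : b * U ^ 2 = a * V ^ 2 := by
        have := pow_eq_zero_iff (n := 2) (by norm_num) |>.mp h6
        linarith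
      have hab : lam = a - b := by linarith
      rw [hab]
      have hmul : b * (U ^ 2 - V ^ 2) ≤ b * ((a - b) * X) := by nlinarith
      exact le_of_mul_le_mul_left hmul hbpos
  · -- lam + b - a > 0
    have hlb : 0 < lam + b := by linarith
    have hexp : (lam + b) * ((lam + b) * V ^ 2 + (a - lam) * U ^ 2 - 2 * (C * U * V)) =
        ((lam + b) * V - C * U) ^ 2 := by linear_combination -U ^ 2 * hCeq
    have h2 : 0 ≤ (lam + b) * V ^ 2 + (a - lam) * U ^ 2 - 2 * R := by
      by_contra h
      push_neg at h
      have hp := mul_pos hlb (show (0:ℝ) < 2 * R - ((lam + b) * V ^ 2 + (a - lam) * U ^ 2) by linarith)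
      have hq : 0 ≤ (lam + b) * (C * U * V - R) := mul_nonneg hlb.le (by linarith)
      nlinarith [hexp, sq_nonneg ((lam + b) * V - C * U)]
    have hid : (lam + b - a) * (lam * X + V ^ 2 - U ^ 2) =
        ((a * b - C ^ 2) * X - (b * U ^ 2 + a * V ^ 2 - 2 * R))
        + ((lam + b) * V ^ 2 + (a - lam) * U ^ 2 - 2 * R) := by
      linear_combination X * hCeq
    have hpos : 0 ≤ (lam + b - a) * (lam * X + V ^ 2 - U ^ 2) := by
      rw [hid]; linarith
    by_contra h
    push_neg at h
    have := mul_pos hDpos (show (0:ℝ) < U ^ 2 - V ^ 2 - lam * X by linarith)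
    nlinarith

private 

lemma gram_ineq (f g x : EuclideanSpace ℂ (Fin N)) :
    ‖g‖ ^ 2 * ‖⟪f, x⟫_ℂ‖ ^ 2 + ‖f‖ ^ 2 * ‖⟪g, x⟫_ℂ‖ ^ 2
      - 2 * (⟪f, g⟫_ℂ * ⟪g, x⟫_ℂ * conj ⟪f, x⟫_ℂ).re
      ≤ (‖f‖ ^ 2 * ‖g‖ ^ 2 - ‖⟪f, g⟫_ℂ‖ ^ 2) * ‖x‖ ^ 2 := by
  set u := ⟪f, x⟫_ℂ with hu
  set v := ⟪g, x⟫_ℂ with hv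
  set c := ⟪f, g⟫_ℂ with hc
  set A := ‖f‖ ^ 2 with hA
  set B := ‖g‖ ^ 2 with hB
  set X := ‖x‖ ^ 2 with hX
  set D := A * B - ‖c‖ ^ 2 with hD
  set R := (c * v * conj u).re with hR
  set w : EuclideanSpace ℂ (Fin N) :=
    (D : ℂ) • x - (B * u - c * v) • f - (A * v - conj c * u) • g with hw
  have hcc : (((‖c‖ ^ 2 : ℝ)) : ℂ) = c * conj c := by
    rw [Complex.mul_conj']; push_cast; ring
  have hUc : (((‖u‖ ^ 2 : ℝ)) : ℂ) = u * conj u := by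
    rw [Complex.mul_conj']; push_cast; ring
  have hVc : (((‖v‖ ^ 2 : ℝ)) : ℂ) = v * conj v := by
    rw [Complex.mul_conj']; push_cast; ring
  have hRc : ((2 * R : ℝ) : ℂ) = c * v * conj u + conj c * conj v * u := by
    rw [hR]
    rw [show conj c * conj v * u = conj (c * v * conj u) by simp [mul_comm]]
    rw [Complex.add_conj]
  have hxx : ⟪x, x⟫_ℂ = ((X : ℝ) : ℂ) := by
    rw [inner_self_eq_norm_sq_to_K]; norm_cast
  have hff : ⟪f, f⟫_ℂ = ((A : ℝ) : ℂ) := by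
    rw [inner_self_eq_norm_sq_to_K]; norm_cast
  have hgg : ⟪g, g⟫_ℂ = ((B : ℝ) : ℂ) := by
    rw [inner_self_eq_norm_sq_to_K]; norm_cast
  have hxf : ⟪x, f⟫_ℂ = conj u := by rw [hu, inner_conj_symm]
  have hxg : ⟪x, g⟫_ℂ = conj v := by rw [hv, inner_conj_symm]
  have hgf : ⟪g, f⟫_ℂ = conj c := by rw [hc, inner_conj_symm]
  have hid : ⟪w, w⟫_ℂ =
      ((D * (D * X - (B * ‖u‖ ^ 2 + A * ‖v‖ ^ 2 - 2 * R)) : ℝ) : ℂ) := by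
    simp only [hw, inner_sub_left, inner_sub_right, inner_smul_left, inner_smul_right,
      hxx, hff, hgg, hxf, hxg, hgf, ← hu, ← hv, ← hc, map_sub, map_mul, map_ofNat,
      Complex.conj_ofReal, Complex.conj_conj]
    push_cast [hD]
    have hcc' : ((‖c‖ : ℂ)) ^ 2 = c * conj c := by rw [← hcc]; push_cast; ring
    have hUc' : ((‖u‖ : ℂ)) ^ 2 = u * conj u := by rw [← hUc]; push_cast; ring
    have hVc' : ((‖v‖ : ℂ)) ^ 2 = v * conj v := by rw [← hVc]; push_cast; ring
    have hRc' : ((R : ℝ) : ℂ) = (c * v * conj u + conj c * conj v * u) / 2 := by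
      rw [eq_div_iff (by norm_num : (2:ℂ) ≠ 0), ← hRc]; push_cast; ring
    rw [hcc', hUc', hVc', hRc']
    ring
  have hDnn : 0 ≤ D := by
    have h1 := norm_inner_le_norm (𝕜 := ℂ) f g
    rw [← hc] at h1
    have h2 : ‖c‖ ^ 2 ≤ A * B := by
      rw [hA, hB]; nlinarith [norm_nonneg c, norm_nonneg f, norm_nonneg g]
    rw [hD]; linarith
  have hwnn : 0 ≤ D * (D * X - (B * ‖u‖ ^ 2 + A * ‖v‖ ^ 2 - 2 * R)) := by
    have h1 : 0 ≤ RCLike.re ⟪w, w⟫_ℂ := inner_self_nonneg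
    rwa [hid, RCLike.re_to_complex, Complex.ofReal_re] at h1
  rcases eq_or_lt_of_le hDnn with hD0 | hDpos
  · -- degenerate case
    have hw0 : w = 0 := by
      have h1 : ⟪w, w⟫_ℂ = 0 := by rw [hid, ← hD0]; norm_num
      exact inner_self_eq_zero.mp h1
    have hexp : ⟪w, x⟫_ℂ = (D : ℂ) * (X : ℂ)
        - ((B : ℂ) * conj u - conj c * conj v) * u - ((A : ℂ) * conj v - c * conj u) * v := by
      simp only [hw, inner_sub_left, inner_smul_left, hxx, ← hu, ← hv, map_sub, map_mul,
        Complex.conj_ofReal, Complex.conj_conj]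
    have hid2 : ⟪w, x⟫_ℂ + conj ⟪w, x⟫_ℂ =
        ((2 * (D * X - (B * ‖u‖ ^ 2 + A * ‖v‖ ^ 2 - 2 * R)) : ℝ) : ℂ) := by
      rw [hexp]
      simp only [map_sub, map_mul, Complex.conj_ofReal, Complex.conj_conj]
      push_cast [hD]
      have hUc' : ((‖u‖ : ℂ)) ^ 2 = u * conj u := by rw [← hUc]; push_cast; ring
      have hVc' : ((‖v‖ : ℂ)) ^ 2 = v * conj v := by rw [← hVc]; push_cast; ring
      have hRc' : ((R : ℝ) : ℂ) = (c * v * conj u + conj c * conj v * u) / 2 := by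
        rw [eq_div_iff (by norm_num : (2:ℂ) ≠ 0), ← hRc]; push_cast; ring
      rw [hUc', hVc', hRc']
      ring
    rw [hw0] at hid2
    simp only [inner_zero_left, map_zero, add_zero, zero_add] at hid2
    have h3 : 2 * (D * X - (B * ‖u‖ ^ 2 + A * ‖v‖ ^ 2 - 2 * R)) = 0 := by
      exact_mod_cast hid2.symm
    linarith
  · nlinarith [hwnn, mul_pos hDpos hDpos]




private lemma quad_val (f g x : EuclideanSpace ℂ (Fin N)) :
    ⟪x, ((innerSL ℂ f).smulRight f - (innerSL ℂ g).smulRight g) x⟫_ℂ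
      = ((‖⟪f, x⟫_ℂ‖ ^ 2 - ‖⟪g, x⟫_ℂ‖ ^ 2 : ℝ) : ℂ) := by
  simp only [ContinuousLinearMap.sub_apply, ContinuousLinearMap.smulRight_apply,
    innerSL_apply_apply, inner_sub_right, inner_smul_right]
  rw [← inner_conj_symm x f, ← inner_conj_symm x g, Complex.mul_conj', Complex.mul_conj']
  push_cast
  ring

private lemma sym_val (f g x y : EuclideanSpace ℂ (Fin N)) :
    ⟪((innerSL ℂ f).smulRight f - (innerSL ℂ g).smulRight g) x, y⟫_ℂ
      = ⟪x, ((innerSL ℂ f).smulRight f - (innerSL ℂ g).smulRight g) y⟫_ℂ := by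
  simp only [ContinuousLinearMap.sub_apply, ContinuousLinearMap.smulRight_apply,
    innerSL_apply_apply, inner_sub_right, inner_sub_left, inner_smul_right, inner_smul_left]
  rw [← inner_conj_symm x f, ← inner_conj_symm x g, ← inner_conj_symm f y, ← inner_conj_symm g y]
  ring



private lemma polar_bound (T : EuclideanSpace ℂ (Fin N) →L[ℂ] EuclideanSpace ℂ (Fin N))
    (lam : ℝ) (hlam : 0 ≤ lam)
    (hsym : ∀ x y, ⟪T x, y⟫_ℂ = ⟪x, T y⟫_ℂ)
    (hq : ∀ x, |(⟪x, T x⟫_ℂ).re| ≤ lam * ‖x‖ ^ 2) (x : EuclideanSpace ℂ (Fin N)) :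
    ‖T x‖ ≤ lam * ‖x‖ := by
  have hcross : ∀ y, (⟪y, T x⟫_ℂ).re ≤ (lam / 2) * (‖x‖ ^ 2 + ‖y‖ ^ 2) := by
    intro y
    have hre : (⟪x, T y⟫_ℂ).re = (⟪y, T x⟫_ℂ).re := by
      rw [← hsym x y, ← inner_conj_symm (T x) y, ← hsym y x, Complex.conj_re]
    have e1 : (⟪x + y, T (x + y)⟫_ℂ).re
        = (⟪x, T x⟫_ℂ).re + (⟪y, T x⟫_ℂ).re + (⟪y, T x⟫_ℂ).re + (⟪y, T y⟫_ℂ).re := by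
      rw [map_add]
      simp only [inner_add_left, inner_add_right, Complex.add_re]
      rw [hre]; ring
    have e2 : (⟪x - y, T (x - y)⟫_ℂ).re
        = (⟪x, T x⟫_ℂ).re - (⟪y, T x⟫_ℂ).re - (⟪y, T x⟫_ℂ).re + (⟪y, T y⟫_ℂ).re := by
      rw [map_sub]
      simp only [inner_sub_left, inner_sub_right, Complex.sub_re]
      rw [hre]; ring
    have par := parallelogram_law_with_norm ℂ x y
    have q1 := abs_le.mp (hq (x + y))
    have q2 := abs_le.mp (hq (x - y))
    nlinarith [q1.1, q1.2, q2.1, q2.2]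
  by_cases hTx : T x = 0
  · rw [hTx, norm_zero]
    positivity
  · have hTxn : 0 < ‖T x‖ := norm_pos_iff.mpr hTx
    have hxn : 0 < ‖x‖ := by
      rcases eq_or_lt_of_le (norm_nonneg x) with h | h
      · exfalso; apply hTx; rw [show x = 0 from norm_eq_zero.mp h.symm, map_zero]
      · exact h
    set r : ℝ := ‖x‖ / ‖T x‖ with hr
    have hrpos : 0 < r := div_pos hxn hTxn
    set y : EuclideanSpace ℂ (Fin N) := ((r : ℂ)) • T x with hy
    have hyn : ‖y‖ = ‖x‖ := by
      rw [hy, norm_smul, Complex.norm_real, Real.norm_eq_abs, abs_of_pos hrpos, hr]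
      field_simp
    have hrey : (⟪y, T x⟫_ℂ).re = ‖x‖ * ‖T x‖ := by
      have h3 : (⟪y, T x⟫_ℂ) = ((‖x‖ * ‖T x‖ : ℝ) : ℂ) := by
        rw [hy, inner_smul_left, Complex.conj_ofReal, inner_self_eq_norm_sq_to_K, hr]
        push_cast
        have : (‖T x‖ : ℂ) ≠ 0 := by exact_mod_cast hTxn.ne'
        field_simp
        rfl
      rw [h3, Complex.ofReal_re]
    have := hcross y
    rw [hrey, hyn] at this
    have h2 : ‖x‖ * ‖T x‖ ≤ lam * ‖x‖ ^ 2 := by nlinarith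
    nlinarith

end Aux

set_option maxHeartbeats 1000000

/-- For `f, g ∈ ℂ^N` with `‖f‖ ≥ ‖g‖`, the operator norm of the Hermitian
rank-`≤ 2` operator `ff* - gg*` (where `hh*` maps `x` to `⟨x, h⟩ h`) equals
`(1/2)(‖f‖² - ‖g‖² + ((‖f‖² + ‖g‖²)² - 4|⟨f, g⟩|²)^{1/2})`. -/
theorem opNorm_rank_two_difference
    {N : ℕ} (f g : EuclideanSpace ℂ (Fin N)) (hfg : ‖g‖ ≤ ‖f‖) :
    ‖(innerSL ℂ f).smulRight f - (innerSL ℂ g).smulRight g‖ =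
      (1 / 2) * (‖f‖ ^ 2 - ‖g‖ ^ 2 +
        Real.sqrt ((‖f‖ ^ 2 + ‖g‖ ^ 2) ^ 2 - 4 * ‖(inner ℂ f g : ℂ)‖ ^ 2)) := by
  set T := (innerSL ℂ f).smulRight f - (innerSL ℂ g).smulRight g with hT
  set c : ℂ := ⟪f, g⟫_ℂ with hc
  set a : ℝ := ‖f‖ ^ 2 with ha
  set b : ℝ := ‖g‖ ^ 2 with hb
  set C : ℝ := ‖c‖ with hC
  set S : ℝ := Real.sqrt ((a + b) ^ 2 - 4 * C ^ 2) with hSdef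
  set lam : ℝ := 1 / 2 * (a - b + S) with hlamdef
  have ha0 : 0 ≤ a := by rw [ha]; positivity
  have hb0 : 0 ≤ b := by rw [hb]; positivity
  have hC0 : 0 ≤ C := norm_nonneg _
  have hba : b ≤ a := by
    rw [ha, hb]; nlinarith [norm_nonneg f, norm_nonneg g]
  have hCab : C ^ 2 ≤ a * b := by
    have h1 := norm_inner_le_norm (𝕜 := ℂ) f g
    rw [← hc, ← hC] at h1
    rw [ha, hb]; nlinarith [norm_nonneg f, norm_nonneg g]
  have harg : 0 ≤ (a + b) ^ 2 - 4 * C ^ 2 := by nlinarith [sq_nonneg (a - b)]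
  have hS2 : S ^ 2 = (a + b) ^ 2 - 4 * C ^ 2 := Real.sq_sqrt harg
  have hSnn : 0 ≤ S := Real.sqrt_nonneg _
  have hSba : a - b ≤ S := by nlinarith [sq_nonneg (S + (a - b)), sq_nonneg (S - (a - b))]
  have hSle : S ≤ a + b := by nlinarith [sq_nonneg (S - (a + b)), sq_nonneg C]
  have hlam0 : 0 ≤ lam := by rw [hlamdef]; linarith
  have hD : 0 ≤ lam + b - a := by rw [hlamdef]; linarith
  have hCeq : C ^ 2 = (lam + b) * (a - lam) := by
    rw [hlamdef]; linear_combination (1/4) * hS2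
  -- quadratic form bound
  have hquad : ∀ x, |(⟪x, T x⟫_ℂ).re| ≤ lam * ‖x‖ ^ 2 := by
    intro x
    have hval := quad_val f g x
    rw [← hT] at hval
    have hgram := gram_ineq f g x
    rw [← hc, ← ha, ← hb, ← hC] at hgram
    set U : ℝ := ‖⟪f, x⟫_ℂ‖ with hU
    set V : ℝ := ‖⟪g, x⟫_ℂ‖ with hV
    set X : ℝ := ‖x‖ ^ 2 with hX
    set R : ℝ := (c * ⟪g, x⟫_ℂ * conj ⟪f, x⟫_ℂ).re with hR
    have hU0 : 0 ≤ U := norm_nonneg _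
    have hV0 : 0 ≤ V := norm_nonneg _
    have hX0 : 0 ≤ X := by rw [hX]; positivity
    have hRle : R ≤ C * U * V := by
      have h1 : R ≤ ‖c * ⟪g, x⟫_ℂ * conj ⟪f, x⟫_ℂ‖ := by
        rw [hR]; exact Complex.re_le_norm _
      rw [norm_mul, norm_mul, RCLike.norm_conj] at h1
      rw [← hC, ← hU, ← hV] at h1
      linarith [h1]
    have hUX : U ^ 2 ≤ a * X := by
      have h1 := norm_inner_le_norm (𝕜 := ℂ) f x
      rw [← hU] at h1
      rw [ha, hX]; nlinarith [norm_nonneg f, norm_nonneg x, hU0]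
    have hVX : V ^ 2 ≤ b * X := by
      have h1 := norm_inner_le_norm (𝕜 := ℂ) g x
      rw [← hV] at h1
      rw [hb, hX]; nlinarith [norm_nonneg g, norm_nonneg x, hV0]
    rw [hval, Complex.ofReal_re]
    rw [abs_le]
    constructor
    · have h2 := key_real b a C (lam + b - a) V U X R hb0 ha0 hC0 hX0 hV0 hU0
        (by rw [show C * V * U = C * U * V by ring]; exact hRle)
        (by linarith [hgram])
        hVX hUX hD (by linarith)
        (by linear_combination hCeq)
      have h3 : (lam + b - a) * X ≤ lam * X := by
        apply mul_le_mul_of_nonneg_right _ hX0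
        linarith
      linarith
    · exact key_real a b C lam U V X R ha0 hb0 hC0 hX0 hU0 hV0 hRle hgram hUX hVX hlam0 hD hCeq
  have hsym : ∀ x y, ⟪T x, y⟫_ℂ = ⟪x, T y⟫_ℂ := by
    intro x y; rw [hT]; exact sym_val f g x y
  have upper : ‖T‖ ≤ lam :=
    T.opNorm_le_bound hlam0 (fun x => polar_bound T lam hlam0 hsym hquad x)
  have lower : lam ≤ ‖T‖ := by
    rcases eq_or_lt_of_le hlam0 with h0 | hpos
    · rw [← h0]; exact norm_nonneg _
    · have hlb : 0 < lam + b := by linarith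
      set z : EuclideanSpace ℂ (Fin N) := ((lam + b : ℝ) : ℂ) • f - (conj c) • g with hz
      have hCeqc : ((C : ℂ)) ^ 2 = ((lam : ℂ) + (b : ℂ)) * ((a : ℂ) - (lam : ℂ)) := by
        exact_mod_cast congrArg (Complex.ofReal) hCeq
      have hcc : c * conj c = ((C ^ 2 : ℝ) : ℂ) := by
        rw [hC, Complex.mul_conj']; push_cast; ring
      have hff : ⟪f, f⟫_ℂ = ((a : ℝ) : ℂ) := by
        rw [inner_self_eq_norm_sq_to_K, ha]; norm_cast
      have hgg : ⟪g, g⟫_ℂ = ((b : ℝ) : ℂ) := by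
        rw [inner_self_eq_norm_sq_to_K, hb]; norm_cast
      have hgf : ⟪g, f⟫_ℂ = conj c := by rw [hc, inner_conj_symm]
      have huz : ⟪f, z⟫_ℂ = (((lam + b) * lam : ℝ) : ℂ) := by
        rw [hz]
        simp only [inner_sub_right, inner_smul_right, hff, ← hc]
        rw [show conj c * c = c * conj c by ring, hcc]
        push_cast
        linear_combination -hCeqc
      have hvz : ⟪g, z⟫_ℂ = ((lam : ℝ) : ℂ) * conj c := by
        rw [hz]
        simp only [inner_sub_right, inner_smul_right, hgg, hgf]
        push_cast; ring
      have hz0 : z ≠ 0 := by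
        intro h
        rw [h, inner_zero_right] at huz
        have : (lam + b) * lam = 0 := by exact_mod_cast huz.symm
        nlinarith
      have hzn : 0 < ‖z‖ := norm_pos_iff.mpr hz0
      have hzz : ⟪z, z⟫_ℂ =
          (((lam + b) ^ 2 * a - 2 * (lam + b) * C ^ 2 + b * C ^ 2 : ℝ) : ℂ) := by
        rw [hz]
        simp only [inner_sub_left, inner_sub_right, inner_smul_left, inner_smul_right,
          hff, hgg, hgf, ← hc, map_sub, map_mul, Complex.conj_ofReal, Complex.conj_conj]
        have hcc2 : c * conj c = ((C : ℂ)) ^ 2 := by rw [hcc]; push_cast; ring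
        push_cast
        linear_combination ((b : ℂ) - 2 * ((lam : ℂ) + (b : ℂ))) * hcc2
      have hZval : ‖z‖ ^ 2 = (lam + b) ^ 2 * a - 2 * (lam + b) * C ^ 2 + b * C ^ 2 := by
        have h1 := inner_self_eq_norm_sq (𝕜 := ℂ) z
        rw [hzz, RCLike.re_to_complex, Complex.ofReal_re] at h1
        exact h1.symm
      have hval := quad_val f g z
      rw [← hT] at hval
      have hnf : ‖⟪f, z⟫_ℂ‖ ^ 2 = ((lam + b) * lam) ^ 2 := by
        rw [huz, Complex.norm_real, Real.norm_eq_abs, sq_abs]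
      have hng : ‖⟪g, z⟫_ℂ‖ ^ 2 = lam ^ 2 * C ^ 2 := by
        rw [hvz, norm_mul, Complex.norm_real, RCLike.norm_conj, ← hC]
        rw [Real.norm_eq_abs, abs_of_nonneg hlam0]
        ring
      have hquadz : (⟪z, T z⟫_ℂ).re = lam * ‖z‖ ^ 2 := by
        rw [hval, Complex.ofReal_re, hnf, hng, hZval]
        linear_combination (lam * (lam + b)) * hCeq
      have r1 : (⟪z, T z⟫_ℂ).re ≤ ‖⟪z, T z⟫_ℂ‖ := Complex.re_le_norm _
      have r2 : ‖⟪z, T z⟫_ℂ‖ ≤ ‖z‖ * ‖T z‖ := norm_inner_le_norm z (T z)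
      have r3 : ‖T z‖ ≤ ‖T‖ * ‖z‖ := T.le_opNorm z
      have h5 : lam * ‖z‖ ^ 2 ≤ ‖T‖ * ‖z‖ ^ 2 := by nlinarith [norm_nonneg (T z), norm_nonneg T]
      nlinarith [hzn, sq_nonneg ‖z‖, mul_pos hzn hzn]
  exact le_antisymm upper lower
end

section
/- Let f, g ∈ ℂ^N with ‖f‖ = 1 and ‖g‖ ≤ 1. Then inf_{|α|=1} ‖f − αg‖ ≤ 2 ‖ff* − gg*‖, where ‖ff* − gg*‖ is the operator norm. -/
/-- For `f, g ∈ ℂ^N` with `‖f‖ = 1` and `‖g‖ ≤ 1`,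
`inf_{|α|=1} ‖f - α g‖ ≤ 2 ‖ff* - gg*‖`, where `hh*` maps `x` to `⟨x, h⟩ h` and the norm on
the right is the operator norm. -/
theorem quotient_dist_le_opNorm_rank_two
    {N : ℕ} (f g : EuclideanSpace ℂ (Fin N)) (hf : ‖f‖ = 1) (hg : ‖g‖ ≤ 1) :
    (⨅ α : Metric.sphere (0 : ℂ) 1, ‖f - (α : ℂ) • g‖) ≤
      2 * ‖(innerSL ℂ f).smulRight f - (innerSL ℂ g).smulRight g‖ := by
  set T := (innerSL ℂ f).smulRight f - (innerSL ℂ g).smulRight g with hT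
  set b : ℂ := inner ℂ g f with hb
  set t : ℝ := ‖b‖ with ht
  have ht0 : 0 ≤ t := norm_nonneg _
  have ht1 : t ≤ 1 := by
    calc t ≤ ‖g‖ * ‖f‖ := norm_inner_le_norm g f
    _ = ‖g‖ := by rw [hf, mul_one]
    _ ≤ 1 := hg
  have hff : (inner ℂ f f : ℂ) = 1 := by
    rw [inner_self_eq_norm_sq_to_K, hf]; norm_num
  have hTf : T f = f - b • g := by
    simp only [hT, ContinuousLinearMap.sub_apply, ContinuousLinearMap.smulRight_apply,
      innerSL_apply_apply, hff, one_smul, hb]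
  have hTfn : ‖T f‖ ≤ ‖T‖ := by
    have := T.le_opNorm f
    rwa [hf, mul_one] at this
  have hquad : 1 - t ^ 2 ≤ ‖T‖ := by
    have h1 : (inner ℂ f (T f) : ℂ) = ((1 - t ^ 2 : ℝ) : ℂ) := by
      rw [hTf, inner_sub_right, inner_smul_right, hff]
      have h2 : (inner ℂ f g : ℂ) = starRingEnd ℂ b := by rw [hb, inner_conj_symm]
      rw [h2, Complex.mul_conj, Complex.normSq_eq_norm_sq, ← ht]
      push_cast
      ring
    have h3 : ‖(inner ℂ f (T f) : ℂ)‖ ≤ ‖T‖ := by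
      calc ‖(inner ℂ f (T f) : ℂ)‖ ≤ ‖f‖ * ‖T f‖ := norm_inner_le_norm f (T f)
      _ ≤ 1 * ‖T‖ := by rw [hf]; exact mul_le_mul_of_nonneg_left hTfn (by norm_num)
      _ = ‖T‖ := one_mul _
    rw [h1] at h3
    have : ‖((1 - t ^ 2 : ℝ) : ℂ)‖ = 1 - t ^ 2 := by
      rw [Complex.norm_real, Real.norm_eq_abs, abs_of_nonneg]
      nlinarith
    rwa [this] at h3
  set α : ℂ := if b = 0 then 1 else b / (t : ℂ) with hα
  have hαn : ‖α‖ = 1 := by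
    by_cases h : b = 0
    · simp [hα, h]
    · have htne : t ≠ 0 := by simpa [ht] using h
      rw [hα, if_neg h, norm_div, Complex.norm_real, Real.norm_eq_abs, ← ht, abs_of_nonneg ht0]
      field_simp
  have hdiff : ‖b - α‖ = 1 - t := by
    by_cases h : b = 0
    · simp [hα, h, ht]
    · have htne : (t : ℂ) ≠ 0 := by
        simpa [Complex.ofReal_eq_zero, ht] using h
      have hbα : b - α = ((t : ℂ) - 1) * α := by
        rw [hα, if_neg h]
        field_simp
      rw [hbα, norm_mul, hαn, mul_one]
      have : ((t : ℂ) - 1) = ((t - 1 : ℝ) : ℂ) := by push_cast; ring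
      rw [this, Complex.norm_real, Real.norm_eq_abs, abs_of_nonpos (by linarith)]
      ring
  have key : ‖f - α • g‖ ≤ 2 * ‖T‖ := by
    have hsplit : f - α • g = (f - b • g) + (b - α) • g := by
      rw [sub_smul]; abel
    calc ‖f - α • g‖ = ‖(f - b • g) + (b - α) • g‖ := by rw [hsplit]
    _ ≤ ‖f - b • g‖ + ‖(b - α) • g‖ := norm_add_le _ _
    _ ≤ ‖T‖ + (1 - t) * 1 := by
        have h1 : ‖f - b • g‖ ≤ ‖T‖ := by rw [← hTf]; exact hTfn
        have h2 : ‖(b - α) • g‖ ≤ (1 - t) * 1 := by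
          rw [norm_smul, hdiff]
          exact mul_le_mul_of_nonneg_left hg (by linarith)
        linarith
    _ ≤ ‖T‖ + (1 - t ^ 2) := by nlinarith
    _ ≤ ‖T‖ + ‖T‖ := by linarith
    _ = 2 * ‖T‖ := by ring
  have hmem : α ∈ Metric.sphere (0 : ℂ) 1 := by
    simpa [mem_sphere_iff_norm] using hαn
  have hbdd : BddBelow (Set.range fun β : Metric.sphere (0 : ℂ) 1 => ‖f - (β : ℂ) • g‖) := by
    refine ⟨0, fun x hx => ?_⟩
    rcases hx with ⟨i, rfl⟩
    positivity
  exact le_trans (ciInf_le hbdd ⟨α, hmem⟩) key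
end
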